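/- arXiv:2301.01271 — 6 statements merged into one kernel-verified Lean document; each statement's English description precedes it below -/
import Mathlib

section
/- Let X be a totally ordered topological space with the order topology that is connected and separable. Then X is second-countable: the collection of open intervals (a,b) with endpoints in a countable dense subset D, together with half-open intervals [min X, a) and (a, max X] for a ∈ D when the minimum or maximum exists, forms a countable basis for the topology of X. -/
theorem stmt6 (X : Type*) [TopologicalSpace X] [LinearOrder X] [OrderTopology X]
    [ConnectedSpace X] [TopologicalSpace.SeparableSpace X] :
    SecondCountableTopology X := by
  have : DenselyOrdered X := by
    constructor
    intro a b hab
    by_contra h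
    push_neg at h
    obtain ⟨x, -, hx1, hx2⟩ := isPreconnected_univ (Set.Iio b) (Set.Ioi a)
      isOpen_Iio isOpen_Ioi
      (by intro x _; rcases lt_or_ge x b with hxb | hxb
          · exact Or.inl hxb
          · exact Or.inr (lt_of_lt_of_le hab hxb))
      ⟨a, trivial, hab⟩ ⟨b, trivial, hab⟩
    exact absurd hx1 (not_lt.2 (h x hx2))
  exact SecondCountableTopology.of_separableSpace_orderTopology X
end

section
/- A connected, separable, totally ordered topological space with the order topology is metrizable. -/
theorem stmt7 (X : Type*) [TopologicalSpace X] [LinearOrder X] [OrderTopology X]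
    [ConnectedSpace X] [TopologicalSpace.SeparableSpace X] :
    TopologicalSpace.MetrizableSpace X := by
  have hd : DenselyOrdered X := by
    constructor
    intro a b hab
    by_contra h
    push_neg at h
    have hclopen : IsClopen (Set.Iio b) := by
      constructor
      · rw [← isOpen_compl_iff]
        have : (Set.Iio b)ᶜ = Set.Ioi a := by
          ext x
          simp only [Set.mem_compl_iff, Set.mem_Iio, Set.mem_Ioi, not_lt]
          constructor
          · intro hx; exact lt_of_lt_of_le hab hx
          · intro hx
            by_contra hx'
            push_neg at hx'
            exact absurd hx' (not_lt.mpr (h x hx))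
        rw [this]; exact isOpen_Ioi
      · exact isOpen_Iio
    rcases isClopen_iff.mp hclopen with h0 | h1
    · exact (Set.eq_empty_iff_forall_notMem.mp h0 a) hab
    · have : b ∈ Set.Iio b := h1 ▸ Set.mem_univ b
      exact lt_irrefl b this
  have : SecondCountableTopology X :=
    SecondCountableTopology.of_separableSpace_orderTopology X
  exact TopologicalSpace.metrizableSpace_of_t3_secondCountable X
end

section
/- Let X be a connected, separable subset of a topological space; let ≿ be a complete transitive continuous order on X and ≽ a complete transitive relation on X × X with closed graph (A3), jointly satisfying A1 and A1'. Suppose x', x'', y ∈ X satisfy (x', y) ≽ (w, z) ≽ (x'', y) for some (w,z) ∈ X × X. Then there exists x* ∈ X, unique up to indifference, with (x*, y) ∼ (w, z) and x' ≿ x* ≿ x''. -/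
theorem stmt13 {X : Type*} [TopologicalSpace X] [ConnectedSpace X]
    [TopologicalSpace.SeparableSpace X]
    (R : X → X → Prop) (S : X → X → X → X → Prop)
    (hRcomp : ∀ a b : X, R a b ∨ R b a)
    (hRtrans : ∀ a b c : X, R a b → R b c → R a c)
    (hRcont : ∀ y : X, IsOpen {x : X | R x y ∧ ¬ R y x} ∧ IsOpen {x : X | R y x ∧ ¬ R x y})
    (hScomp : ∀ a b c d : X, S a b c d ∨ S c d a b)
    (hStrans : ∀ a b c d e f : X, S a b c d → S c d e f → S a b e f)
    (hA3 : IsClosed {p : X × X × X × X | S p.1 p.2.1 p.2.2.1 p.2.2.2})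
    (hA1 : ∀ a b c : X, S a c b c ↔ R a b)
    (hA1' : ∀ a b c : X, S c a c b ↔ R b a)
    (x' x'' y w z : X)
    (h1 : S x' y w z) (h2 : S w z x'' y) :
    ∃ xs : X, (S xs y w z ∧ S w z xs y) ∧ R x' xs ∧ R xs x'' ∧
      ∀ x2 : X, (S x2 y w z ∧ S w z x2 y) → (R xs x2 ∧ R x2 xs) :=  by
  set A := {x : X | S x y w z} with hA
  set B := {x : X | S w z x y} with hB
  have hAc : IsClosed A := by
    have : Continuous fun x : X => (x, (y, (w, z))) := by continuity
    exact hA3.preimage this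
  have hBc : IsClosed B := by
    have : Continuous fun x : X => (w, (z, (x, y))) := by continuity
    exact hA3.preimage this
  have hcover : A ∪ B = Set.univ := by
    ext x; simp only [Set.mem_union, Set.mem_univ, iff_true, hA, hB, Set.mem_setOf_eq]
    exact hScomp x y w z
  have hne : (A ∩ B).Nonempty := by
    by_contra hcon
    rw [Set.not_nonempty_iff_eq_empty] at hcon
    have : IsPreconnected (Set.univ : Set X) := isPreconnected_univ
    rw [isPreconnected_closed_iff] at this
    obtain ⟨x, _, hxA, hxB⟩ := this A B hAc hBc (by rw [hcover])
      ⟨x', Set.mem_univ _, h1⟩ ⟨x'', Set.mem_univ _, h2⟩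
    exact Set.eq_empty_iff_forall_notMem.mp hcon x ⟨hxA, hxB⟩
  obtain ⟨xs, hxsA, hxsB⟩ := hne
  refine ⟨xs, ⟨hxsA, hxsB⟩, ?_, ?_, ?_⟩
  · exact (hA1 x' xs y).mp (hStrans _ _ _ _ _ _ h1 hxsB)
  · exact (hA1 xs x'' y).mp (hStrans _ _ _ _ _ _ hxsA h2)
  · intro x2 ⟨hx2A, hx2B⟩
    exact ⟨(hA1 xs x2 y).mp (hStrans _ _ _ _ _ _ hxsA hx2B),
           (hA1 x2 xs y).mp (hStrans _ _ _ _ _ _ hx2A hxsB)⟩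
end

section
/- Let X be a connected subset of a topological space, ≿ complete and transitive on X, and ≽ complete, transitive on X × X, satisfying the crossover axiom A2 ((x,y) ∼ (z,w) ⟺ (x,z) ∼ (y,w)), the closed-graph axiom A3, and jointly with ≿ the consistency axiom A1 ((x,z) ≽ (y,z) ⟺ x ≿ y). Then the dual consistency axiom A1' holds: for all x, y, z ∈ X, (z,y) ≽ (z,x) if and only if x ≿ y. -/
theorem stmt15 {X : Type*} [TopologicalSpace X] [ConnectedSpace X]
    (R : X → X → Prop) (S : X → X → X → X → Prop)
    (hRcomp : ∀ a b : X, R a b ∨ R b a)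
    (hRtrans : ∀ a b c : X, R a b → R b c → R a c)
    (hScomp : ∀ a b c d : X, S a b c d ∨ S c d a b)
    (hStrans : ∀ a b c d e f : X, S a b c d → S c d e f → S a b e f)
    (hA2 : ∀ x y z w : X, (S x y z w ∧ S z w x y) ↔ (S x z y w ∧ S y w x z))
    (hA3 : IsClosed {p : X × X × X × X | S p.1 p.2.1 p.2.2.1 p.2.2.2})
    (hA1 : ∀ a b c : X, S a c b c ↔ R a b) :
    ∀ x y z : X, S z y z x ↔ R x y := by
  have refl : ∀ a b : X, S a b a b := fun a b => (hScomp a b a b).elim id id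
  have diag : ∀ a b : X, S a a b b ∧ S b b a a := fun a b =>
    (hA2 a a b b).mpr ⟨refl a b, refl a b⟩
  -- strict case: if x ≻ y then for every z, (z,y) ≻ (z,x)
  have strict : ∀ x y : X, R x y → ¬ R y x → ∀ z, S z y z x ∧ ¬ S z x z y := by
    intro x y hxy hnyx
    set A := {z : X | S z y z x} with hA
    set B := {z : X | S z x z y} with hB
    have hdisj : ∀ w, S w y w x → S w x w y → False := by
      intro w hwA hwB
      have h1 : S w w y x ∧ S y x w w := (hA2 w w y x).mpr ⟨hwA, hwB⟩
      have h3 : S y w x w ∧ S x w y w := (hA2 y x w w).mp ⟨h1.2, h1.1⟩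
      exact hnyx ((hA1 y x w).mp h3.1)
    have hAclosed : IsClosed A := by
      have hc : Continuous fun w : X => (w, y, w, x) := by continuity
      exact hA3.preimage hc
    have hxA : x ∈ A := by
      have h1 : S x y y y := (hA1 x y y).mpr hxy
      exact hStrans x y y y x x h1 (diag y x).1
    have hBA : B = Aᶜ := by
      ext w
      constructor
      · intro hw hwA; exact hdisj w hwA hw
      · intro hw
        rcases hScomp w y w x with h | h
        · exact absurd h hw
        · exact h
    have hBclopen : IsClopen B := by
      constructor
      · have hc : Continuous fun w : X => (w, x, w, y) := by continuity
        exact hA3.preimage hc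
      · rw [hBA]; exact hAclosed.isOpen_compl
    have hBempty : B = ∅ := by
      rcases isClopen_iff.mp hBclopen with h | h
      · exact h
      · exfalso
        have : x ∈ B := h ▸ Set.mem_univ x
        exact hdisj x hxA this
    intro z
    have hznB : z ∉ B := by rw [hBempty]; exact Set.notMem_empty z
    have hzA : z ∈ A := by
      rcases hScomp z y z x with h | h
      · exact h
      · exact absurd h hznB
    exact ⟨hzA, hznB⟩
  intro x y z
  constructor
  · intro hSzy
    by_contra hnxy
    have hyx : R y x := (hRcomp x y).resolve_left hnxy
    exact (strict y x hyx hnxy z).2 hSzy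
  · intro hxy
    by_cases hyx : R y x
    · -- indifference case
      have h1 : S y z x z := (hA1 y x z).mpr hyx
      have h2 : S x z y z := (hA1 x y z).mpr hxy
      have h3 : S y x z z ∧ S z z y x := (hA2 y x z z).mpr ⟨h1, h2⟩
      exact ((hA2 z z y x).mp ⟨h3.2, h3.1⟩).1
    · exact (strict x y hxy hyx z).1
end

section
/- Let X be a connected and separable subset of a topological space, ≿ a complete transitive relation on X, and ≽ a complete transitive relation on X × X satisfying the crossover axiom A2 and the closed-graph axiom A3, with ≿ and ≽ jointly satisfying the consistency axiom A1. Then there exists a continuous function u : X → ℝ such that x ≿ y ⟺ u(x) ≥ u(y) and (x,y) ≽ (z,w) ⟺ u(x) − u(y) ≥ u(z) − u(w), and u is unique up to positive affine transformations. -/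
open Set
set_option linter.unusedSectionVars false

structure DS (X : Type*) [TopologicalSpace X] : Type _ where
  R : X → X → Prop
  S : X → X → X → X → Prop
  rcomp : ∀ a b, R a b ∨ R b a
  rtrans : ∀ a b c, R a b → R b c → R a c
  comp : ∀ a b c d, S a b c d ∨ S c d a b
  trans : ∀ a b c d e f, S a b c d → S c d e f → S a b e f
  a2 : ∀ x y z w, (S x y z w ∧ S z w x y) ↔ (S x z y w ∧ S y w x z)
  a3 : IsClosed {p : X × X × X × X | S p.1 p.2.1 p.2.2.1 p.2.2.2}
  a1 : ∀ a b c, S a c b c ↔ R a b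

namespace DS

variable {X : Type*} [TopologicalSpace X] (D : DS X)

/-- equivalence of pairs -/
def E (x y z w : X) : Prop := D.S x y z w ∧ D.S z w x y

/-- strict comparison of pairs -/
def P (x y z w : X) : Prop := D.S x y z w ∧ ¬ D.S z w x y

variable {D}

lemma S_refl (x y : X) : D.S x y x y := (D.comp x y x y).elim id id

lemma nS {x y z w : X} (h : ¬ D.S x y z w) : D.S z w x y :=
  (D.comp x y z w).resolve_left h

lemma nS' {x y z w : X} (h : ¬ D.S x y z w) : D.P z w x y := ⟨nS h, h⟩

lemma Rrefl (x : X) : D.R x x := (D.rcomp x x).elim id id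

lemma Esymm {a b c d : X} (h : D.E a b c d) : D.E c d a b := ⟨h.2, h.1⟩

lemma Etrans {a b c d e f : X} (h : D.E a b c d) (h' : D.E c d e f) : D.E a b e f :=
  ⟨D.trans _ _ _ _ _ _ h.1 h'.1, D.trans _ _ _ _ _ _ h'.2 h.2⟩

lemma Ecross {x y z w : X} (h : D.E x y z w) : D.E x z y w := (D.a2 x y z w).mp h

lemma Erev {x y z w : X} (h : D.E x y z w) : D.E w z y x :=
  Esymm (Ecross (Esymm (Ecross h)))

lemma Erefl (x y : X) : D.E x y x y := ⟨S_refl x y, S_refl x y⟩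

/-- L2 : comparison with a null pair, symmetric version -/
lemma Ezero {x y c : X} : D.E x y c c ↔ (D.R x y ∧ D.R y x) := by
  constructor
  · intro h
    have h2 := (D.a2 x y c c).mp h
    exact ⟨(D.a1 x y c).mp h2.1, (D.a1 y x c).mp h2.2⟩
  · intro h
    exact (D.a2 x y c c).mpr ⟨(D.a1 x y c).mpr h.1, (D.a1 y x c).mpr h.2⟩

/-- L3 : x - y ≥ 0 iff x ≿ y -/
lemma L3 {x y c : X} : D.S x y c c ↔ D.R x y := by
  constructor
  · intro h
    have h2 : D.S c c y y := (Ezero.mpr ⟨Rrefl y, Rrefl y⟩).2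
    exact (D.a1 x y y).mp (D.trans _ _ _ _ _ _ h h2)
  · intro h
    have h1 : D.S x y y y := (D.a1 x y y).mpr h
    have h2 : D.S y y c c := (Ezero.mpr ⟨Rrefl y, Rrefl y⟩).1
    exact D.trans _ _ _ _ _ _ h1 h2

/-- L3' : 0 ≥ x - y iff y ≿ x -/
lemma L3' {x y c : X} : D.S c c x y ↔ D.R y x := by
  constructor
  · intro h
    have h2 : D.S y y c c := (Ezero.mpr ⟨Rrefl y, Rrefl y⟩).1
    exact (D.a1 y x y).mp (D.trans _ _ _ _ _ _ h2 h)
  · intro h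
    have h1 : D.S y y x y := (D.a1 y x y).mpr h
    have h2 : D.S c c y y := (Ezero.mpr ⟨Rrefl y, Rrefl y⟩).2
    exact D.trans _ _ _ _ _ _ h2 h1


section Helpers

lemma isClosed_S {Y : Type*} [TopologicalSpace Y] {f g h i : Y → X}
    (hf : Continuous f) (hg : Continuous g) (hh : Continuous h) (hi : Continuous i) :
    IsClosed {y | D.S (f y) (g y) (h y) (i y)} := by
  have : {y | D.S (f y) (g y) (h y) (i y)} =
      (fun y => (f y, g y, h y, i y)) ⁻¹' {p : X × X × X × X | D.S p.1 p.2.1 p.2.2.1 p.2.2.2} := rfl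
  rw [this]
  exact D.a3.preimage (hf.prodMk (hg.prodMk (hh.prodMk hi)))

lemma isClosed_R (w : X) : IsClosed {y | D.R y w} := by
  have : {y | D.R y w} = {y | D.S y w w w} := by
    ext y; exact (D.a1 y w w).symm
  rw [this]
  exact isClosed_S continuous_id continuous_const continuous_const continuous_const

lemma isClosed_R' (w : X) : IsClosed {y | D.R w y} := by
  have : {y | D.R w y} = {y | D.S w y y y} := by
    ext y; exact ⟨fun h => (D.a1 w y y).mpr h, fun h => (D.a1 w y y).mp h⟩
  rw [this]
  exact isClosed_S continuous_const continuous_id continuous_id continuous_id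

variable [ConnectedSpace X]

lemma conn_inter {A B : Set X} (hA : IsClosed A) (hB : IsClosed B)
    (hu : ∀ t, t ∈ A ∪ B) (ha : A.Nonempty) (hb : B.Nonempty) : (A ∩ B).Nonempty := by
  have hpc : IsPreconnected (univ : Set X) := isPreconnected_univ
  have := (isPreconnected_closed_iff.mp hpc) A B hA hB
    (fun t _ => hu t)
    (ha.imp (fun t ht => ⟨trivial, ht⟩)) (hb.imp (fun t ht => ⟨trivial, ht⟩))
  obtain ⟨t, _, ht⟩ := this
  exact ⟨t, ht⟩

/-- solver for last slot : find t with (x,y) ∼ (z,t) -/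
lemma solv {x y z : X} (h1 : ∃ t, D.S z t x y) (h2 : ∃ t, D.S x y z t) :
    ∃ t, D.E x y z t := by
  have hA : IsClosed {t | D.S z t x y} :=
    isClosed_S continuous_const continuous_id continuous_const continuous_const
  have hB : IsClosed {t | D.S x y z t} :=
    isClosed_S continuous_const continuous_const continuous_const continuous_id
  have hu : ∀ t, t ∈ {t | D.S z t x y} ∪ {t | D.S x y z t} := by
    intro t
    rcases D.comp x y z t with h | h
    · exact Or.inr h
    · exact Or.inl h
  obtain ⟨t, htA, htB⟩ := conn_inter hA hB hu h1 h2
  exact ⟨t, htB, htA⟩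

/-- solver for third slot : find t with (x,y) ∼ (t,z) -/
lemma solv2 {x y z : X} (h1 : ∃ t, D.S t z x y) (h2 : ∃ t, D.S x y t z) :
    ∃ t, D.E x y t z := by
  have hA : IsClosed {t | D.S t z x y} :=
    isClosed_S continuous_id continuous_const continuous_const continuous_const
  have hB : IsClosed {t | D.S x y t z} :=
    isClosed_S continuous_const continuous_const continuous_id continuous_const
  have hu : ∀ t, t ∈ {t | D.S t z x y} ∪ {t | D.S x y t z} := by
    intro t
    rcases D.comp x y t z with h | h
    · exact Or.inr h
    · exact Or.inl h
  obtain ⟨t, htA, htB⟩ := conn_inter hA hB hu h1 h2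
  exact ⟨t, htB, htA⟩

/-- first-coordinate monotonicity core (strict) -/
lemma L4core {c x y : X} (h1 : D.S c x c y) (h2 : ¬ D.S c y c x) : ¬ D.R x y := by
  by_cases hxc : D.R x c
  · -- R x c : solve (c,x) ∼ (t,y)
    obtain ⟨t, htE⟩ := solv2 (x := c) (y := x) (z := y)
      ⟨y, L3'.mpr hxc⟩ ⟨c, h1⟩
    have h3 : D.S t y c y := D.trans _ _ _ _ _ _ htE.2 h1
    have h4 : ¬ D.S c y t y := fun h => h2 (D.trans _ _ _ _ _ _ h htE.2)
    have hRtc : D.R t c := (D.a1 t c y).mp h3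
    have hnRct : ¬ D.R c t := fun h => h4 ((D.a1 c t y).mpr h)
    have hE2 := Ecross htE  -- E c t x y
    intro hRxy
    have h5 : D.S x y c c := L3.mpr hRxy
    have h6 : D.S c t c c := D.trans _ _ _ _ _ _ hE2.1 h5
    exact hnRct (L3.mp h6)
  · by_cases hcy : D.R c y
    · -- solve (c,y) ∼ (t,x)
      obtain ⟨t, htE⟩ := solv2 (x := c) (y := y) (z := x)
        ⟨c, h1⟩ ⟨x, L3.mpr hcy⟩
      have h3 : D.S c x t x := D.trans _ _ _ _ _ _ h1 htE.1
      have h4 : ¬ D.S t x c x := fun h => h2 (D.trans _ _ _ _ _ _ htE.1 h)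
      have hRct : D.R c t := (D.a1 c t x).mp h3
      have hnRtc : ¬ D.R t c := fun h => h4 ((D.a1 t c x).mpr h)
      have hE2 := Ecross htE  -- E c t y x
      intro hRxy
      have h5 : D.S c c y x := L3'.mpr hRxy
      have h6 : D.S c c c t := D.trans _ _ _ _ _ _ h5 hE2.2
      exact hnRtc (L3'.mp h6)
    · intro hRxy
      have hyc : D.R y c := (D.rcomp c y).resolve_left hcy
      exact hxc (D.rtrans _ _ _ hRxy hyc)

/-- L4 : c - x ≥ c - y iff y ≿ x -/
lemma L4 {c x y : X} : D.S c x c y ↔ D.R y x := by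
  constructor
  · intro h
    by_cases h2 : D.S c y c x
    · have hE : D.E c x c y := ⟨h, h2⟩
      have := Ecross hE  -- E c c x y
      exact (L3'.mp this.1)
    · exact (D.rcomp x y).resolve_left (L4core h h2)
  · intro h
    by_contra hc
    have := L4core (nS hc) hc
    exact this h

end Helpers


section Core
variable [ConnectedSpace X]

lemma pat {p q r s t : X} (h : D.S p q r s) (ht : D.E p q r t) : D.S s r q p := by
  have h3 : D.S r t r s := D.trans _ _ _ _ _ _ ht.2 h
  have hRst : D.R s t := L4.mp h3
  have h4 : D.S s r t r := (D.a1 s t r).mpr hRst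
  have h5 : D.S t r q p := (Erev ht).1
  exact D.trans _ _ _ _ _ _ h4 h5

/-- G1 : reversal -/
lemma G1 {x y z w : X} (h : D.S x y z w) : D.S w z y x := by
  by_cases hyx : D.R y x
  · obtain ⟨t, ht⟩ := solv (x := x) (y := y) (z := z) ⟨z, L3'.mpr hyx⟩ ⟨w, h⟩
    exact pat h ht
  · have hxy : D.R x y := (D.rcomp x y).resolve_right hyx
    by_contra hc
    have h2 : D.S y x w z := nS hc
    obtain ⟨t, ht⟩ := solv (x := y) (y := x) (z := w) ⟨w, L3'.mpr hxy⟩ ⟨z, h2⟩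
    have h3 : D.S z w x y := pat h2 ht
    have hE : D.E x y z w := ⟨h, h3⟩
    exact hc (Erev hE).1

lemma G2aux {x y z w : X} (h : D.S x y z w) (hyx : D.R y x) : D.S x z y w := by
  obtain ⟨t, ht⟩ := solv (x := x) (y := y) (z := z) ⟨z, L3'.mpr hyx⟩ ⟨w, h⟩
  have h1 : D.S x z y t := (Ecross ht).1
  have h3 : D.S z t z w := D.trans _ _ _ _ _ _ ht.2 h
  have hRwt : D.R w t := L4.mp h3
  have h4 : D.S y t y w := L4.mpr hRwt
  exact D.trans _ _ _ _ _ _ h1 h4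

/-- G2 : crossover, full version -/
lemma G2 {x y z w : X} (h : D.S x y z w) : D.S x z y w := by
  by_cases hyx : D.R y x
  · exact G2aux h hyx
  · by_cases hzw : D.R z w
    · have h1 : D.S w z y x := G1 h
      have h2 : D.S w y z x := G2aux h1 hzw
      exact G1 h2
    · have hxy : D.R x y := (D.rcomp x y).resolve_right hyx
      have hwz : D.R w z := (D.rcomp z w).resolve_left hzw
      have h1 : D.S x z y z := (D.a1 x y z).mpr hxy
      have h2 : D.S y z y w := L4.mpr hwz
      exact D.trans _ _ _ _ _ _ h1 h2

lemma G2iff {x y z w : X} : D.S x y z w ↔ D.S x z y w := ⟨G2, G2⟩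

/-- L5 : concatenation -/
lemma L5 {a b c d e f : X} (h1 : D.S a b c d) (h2 : D.S b e d f) : D.S a e c f := by
  have := D.trans _ _ _ _ _ _ (G2 h1) (G2 h2)
  exact G2 this

lemma G1iff {x y z w : X} : D.S x y z w ↔ D.S w z y x := ⟨G1, G1⟩

-- strict helpers
lemma Ptrans1 {a b c d e f : X} (h1 : D.P a b c d) (h2 : D.S c d e f) : D.P a b e f := by
  refine ⟨D.trans _ _ _ _ _ _ h1.1 h2, fun hc => h1.2 (D.trans _ _ _ _ _ _ h2 hc)⟩

lemma Ptrans2 {a b c d e f : X} (h1 : D.S a b c d) (h2 : D.P c d e f) : D.P a b e f := by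
  refine ⟨D.trans _ _ _ _ _ _ h1 h2.1, fun hc => h2.2 (D.trans _ _ _ _ _ _ hc h1)⟩

lemma L5P1 {a b c d e f : X} (h1 : D.P a b c d) (h2 : D.S b e d f) : D.P a e c f := by
  refine ⟨L5 h1.1 h2, fun hc => h1.2 ?_⟩
  have h3 : D.S f d e b := G1 h2
  exact L5 hc h3

lemma L5P2 {a b c d e f : X} (h1 : D.S a b c d) (h2 : D.P b e d f) : D.P a e c f := by
  refine ⟨L5 h1 h2.1, fun hc => h2.2 ?_⟩
  have h3 : D.S d c b a := G1 h1
  exact L5 h3 hc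

lemma G1P {x y z w : X} (h : D.P x y z w) : D.P w z y x :=
  ⟨G1 h.1, fun hc => h.2 (G1 hc)⟩

lemma G2P {x y z w : X} (h : D.P x y z w) : D.P x z y w :=
  ⟨G2 h.1, fun hc => h.2 (G1 (G2 hc))⟩

/-- cancellation : if (A,B) ∼ (C,D) and B ≈ D then A ≈ C -/
lemma CANC {A B C D' : X} (h : D.E A B C D') (h1 : D.R B D') (h2 : D.R D' B) :
    D.R A C ∧ D.R C A := by
  have hE1 : D.E A C B D' := Ecross h
  have hE2 : D.E B D' A A := Ezero.mpr ⟨h1, h2⟩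
  exact Ezero.mp (Etrans hE1 hE2)

/-- step compare : s ≿ t, equal steps up ⇒ s' ≿ t' -/
lemma STEPLE {s t s' t' p q : X} (hR : D.R s t) (h1 : D.E s' s p q) (h2 : D.E t' t p q) :
    D.R s' t' := by
  have hE : D.E s' s t' t := Etrans h1 (Esymm h2)
  have hE2 : D.E s' t' s t := Ecross hE
  have h3 : D.S s t s s := L3.mpr hR
  exact L3.mp (D.trans _ _ _ _ _ _ hE2.1 h3)

/-- subtract more from the bigger side : A ≿ B, A-A' = p-q ≤ p'-q' = B-B' ⇒ A' ≿ B' -/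
lemma SUBLE {A B A' B' p q p' q' : X} (hR : D.R A B) (h1 : D.E A A' p q) (h2 : D.E B B' p' q')
    (h3 : D.S p' q' p q) : D.R A' B' := by
  have h4 : D.S B B' p q := D.trans _ _ _ _ _ _ h2.1 h3
  have h5 : D.S B B' A A' := D.trans _ _ _ _ _ _ h4 h1.2
  have h6 : D.S B A B' A' := G2 h5
  have h7 : D.S A A B A := (D.a1 A B A).mpr hR
  have h8 : D.S A A B' A' := D.trans _ _ _ _ _ _ h7 h6
  exact L3'.mp h8

/-- subtract equal amounts : q-t ≥ sn-si , t'-t = s'-si ⇒ q-t' ≥ sn-s' -/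
lemma SUBEQ {q t sn si t' s' p q' : X} (h : D.S q t sn si) (h1 : D.E t' t p q')
    (h2 : D.E s' si p q') : D.S q t' sn s' := by
  have hE : D.E t' t s' si := Etrans h1 (Esymm h2)
  have hE2 : D.E t' s' t si := Ecross hE
  have h3 : D.S q sn t si := G2 h
  have h4 : D.S q sn t' s' := D.trans _ _ _ _ _ _ h3 hE2.2
  exact G2 h4

/-- halves of equal intervals are equal -/
lemma HALF {q p q' p' m m' : X} (ht : D.E q p q' p') (hm : D.E q m m p) (hm' : D.E q' m' m' p') :
    D.E m p m' p' := by
  have key : ∀ q₁ p₁ q₂ p₂ m₁ m₂ : X, D.E q₁ p₁ q₂ p₂ → D.E q₁ m₁ m₁ p₁ → D.E q₂ m₂ m₂ p₂ →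
      D.S m₁ p₁ m₂ p₂ := by
    intro q₁ p₁ q₂ p₂ m₁ m₂ htt hmm hmm'
    by_contra hc
    have hP : D.P m₂ p₂ m₁ p₁ := nS' hc
    have h1 : D.P q₂ m₂ m₁ p₁ := Ptrans2 hmm'.1 hP
    have h2 : D.P q₂ m₂ q₁ m₁ := Ptrans1 h1 hmm.2
    have h3 : D.P q₂ p₂ q₁ p₁ := L5P1 h2 hP.1
    exact h3.2 htt.1
  exact ⟨key q p q' p' m m' ht hm hm', key q' p' q p m' m (Esymm ht) hm' hm⟩

end Core


/-- strict order -/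
def Rs (D : DS X) (x y : X) : Prop := D.R x y ∧ ¬ D.R y x

lemma Rs_of_not {x y : X} (h : ¬ D.R x y) : D.Rs y x :=
  ⟨(D.rcomp x y).resolve_left h, h⟩

lemma Rs_trans1 {x y z : X} (h1 : D.Rs x y) (h2 : D.R y z) : D.Rs x z :=
  ⟨D.rtrans _ _ _ h1.1 h2, fun hc => h1.2 (D.rtrans _ _ _ h2 hc)⟩

lemma Rs_trans2 {x y z : X} (h1 : D.R x y) (h2 : D.Rs y z) : D.Rs x z :=
  ⟨D.rtrans _ _ _ h1 h2.1, fun hc => h2.2 (D.rtrans _ _ _ hc h1)⟩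

lemma posStep {t' t p q : X} (h : D.E t' t p q) (hpq : D.Rs p q) : D.Rs t' t := by
  constructor
  · have h1 : D.S p q t t := L3.mpr hpq.1
    exact L3.mp (D.trans _ _ _ _ _ _ h.1 h1)
  · intro h'
    have h1 : D.S t t t' t := L3'.mpr h'
    have h2 : D.S t t p q := D.trans _ _ _ _ _ _ h1 h.1
    exact hpq.2 (L3'.mp h2)

section Mid
variable [ConnectedSpace X]

lemma mid_exists (x y : X) : ∃ t, D.E x t t y := by
  have hA : IsClosed {t | D.S x t t y} :=
    isClosed_S continuous_const continuous_id continuous_id continuous_const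
  have hB : IsClosed {t | D.S t y x t} :=
    isClosed_S continuous_id continuous_const continuous_const continuous_id
  have hu : ∀ t, t ∈ {t | D.S x t t y} ∪ {t | D.S t y x t} := by
    intro t
    rcases D.comp x t t y with h | h
    · exact Or.inl h
    · exact Or.inr h
  have hne : {t | D.S x t t y}.Nonempty ∧ {t | D.S t y x t}.Nonempty := by
    rcases D.rcomp x y with h | h
    · exact ⟨⟨y, (D.a1 x y y).mpr h⟩, ⟨x, L4.mpr h⟩⟩
    · exact ⟨⟨x, L4.mpr h⟩, ⟨y, (D.a1 y x y).mpr h⟩⟩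
  obtain ⟨t, h1, h2⟩ := conn_inter hA hB hu hne.1 hne.2
  exact ⟨t, h1, h2⟩

variable (D)

noncomputable def mid (x y : X) : X := (mid_exists (D := D) x y).choose

lemma mid_spec (x y : X) : D.E x (D.mid x y) (D.mid x y) y :=
  (mid_exists (D := D) x y).choose_spec

variable {D}

lemma mid_betw {x y : X} (hxy : D.R x y) : D.R x (D.mid x y) ∧ D.R (D.mid x y) y := by
  set m := D.mid x y with hm
  have hE := D.mid_spec x y
  constructor
  · by_contra hxm
    have hmx : D.R m x := (D.rcomp x m).resolve_left hxm
    have h1 : ¬ D.S m y m m := by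
      intro hc
      exact hxm (L3.mp (D.trans _ _ _ _ _ _ hE.1 hc))
    have hym : D.R y m := (D.rcomp m y).resolve_left (fun h => h1 (L3.mpr h))
    have h2 : ¬ D.R m y := fun h => h1 (L3.mpr h)
    exact h2 (D.rtrans _ _ _ hmx hxy)
  · by_contra hmy
    have h1 : ¬ D.S x m m m := by
      intro hc
      exact hmy (L3.mp (D.trans _ _ _ _ _ _ hE.2 hc))
    have hnxm : ¬ D.R x m := fun h => h1 (L3.mpr h)
    exact hnxm (D.rtrans _ _ _ hxy ((D.rcomp m y).resolve_left hmy))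

lemma mid_betw_strict {x y : X} (hxy : D.Rs x y) : D.Rs x (D.mid x y) ∧ D.Rs (D.mid x y) y := by
  set m := D.mid x y with hm
  have hE := D.mid_spec x y
  have hb := mid_betw hxy.1
  constructor
  · refine ⟨hb.1, fun hmx => ?_⟩
    have h1 : D.E x m m m := Ezero.mpr ⟨hb.1, hmx⟩
    have h2 : D.E m y m m := Etrans (Esymm hE) h1
    have h3 := Ezero.mp h2
    exact hxy.2 (D.rtrans _ _ _ h3.2 hmx)
  · refine ⟨hb.2, fun hym => ?_⟩
    have h1 : D.E m y m m := Ezero.mpr ⟨hb.2, hym⟩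
    have h2 : D.E x m m m := Etrans hE h1
    have h3 := Ezero.mp h2
    exact hxy.2 (D.rtrans _ _ _ hym h3.2)

variable (D)

/-- the dual structure, reversing the order -/
noncomputable def dual : DS X where
  R := fun x y => D.R y x
  S := fun x y z w => D.S y x w z
  rcomp := fun a b => (D.rcomp b a)
  rtrans := fun a b c h1 h2 => D.rtrans _ _ _ h2 h1
  comp := fun a b c d => by
    rcases D.comp b a d c with h | h
    · exact Or.inl h
    · exact Or.inr h
  trans := fun a b c d e f h1 h2 => D.trans _ _ _ _ _ _ h1 h2
  a2 := by
    intro x y z w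
    constructor
    · intro h
      have h1 : D.E y x w z := ⟨h.1, h.2⟩
      have h2 : D.E z x w y := Ecross (Erev h1)
      exact ⟨h2.1, h2.2⟩
    · intro h
      have h1 : D.E z x w y := ⟨h.1, h.2⟩
      have h2 : D.E y x w z := Erev (Ecross h1)
      exact ⟨h2.1, h2.2⟩
  a3 := by
    have : {p : X × X × X × X | D.S p.2.1 p.1 p.2.2.2 p.2.2.1} =
        (fun p : X × X × X × X => (p.2.1, p.1, p.2.2.2, p.2.2.1)) ⁻¹'
          {p : X × X × X × X | D.S p.1 p.2.1 p.2.2.1 p.2.2.2} := rfl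
    rw [this]
    refine D.a3.preimage ?_
    fun_prop
  a1 := by
    intro a b c
    exact L4 (D := D)

variable {D}

lemma dual_R {x y : X} : (D.dual).R x y ↔ D.R y x := Iff.rfl
lemma dual_S {x y z w : X} : (D.dual).S x y z w ↔ D.S y x w z := Iff.rfl
lemma dual_E {x y z w : X} : (D.dual).E x y z w ↔ D.E y x w z := by
  constructor
  · intro h; exact ⟨h.1, h.2⟩
  · intro h; exact ⟨h.1, h.2⟩
lemma dual_Rs {x y : X} : (D.dual).Rs x y ↔ D.Rs y x := Iff.rfl

/-- Archimedean : no infinite bounded standard sequence -/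
lemma arch {e1 e2 z : X} (he : D.Rs e1 e2) (t : ℕ → X)
    (ht : ∀ i, D.E (t (i+1)) (t i) e1 e2) (hz : ∀ i, D.R z (t i)) : False := by
  classical
  set C : Set X := {c | ∀ i, D.R c (t i)} with hC
  have hCclosed : IsClosed C := by
    have : C = ⋂ i, {c | D.R c (t i)} := by
      ext c; simp [hC]
    rw [this]
    exact isClosed_iInter (fun i => isClosed_R (t i))
  have hCne : C.Nonempty := ⟨z, hz⟩
  have ht0 : ∀ i, D.Rs (t (i+1)) (t i) := fun i => posStep (ht i) he
  have hCne' : Cᶜ.Nonempty := ⟨t 0, fun h => (ht0 0).2 (h 1)⟩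
  have hCnotopen : ¬ IsOpen C := by
    intro h
    have : IsClopen C := ⟨hCclosed, h⟩
    rcases isClopen_iff.mp this with h' | h'
    · exact hCne.ne_empty h'
    · obtain ⟨w, hw⟩ := hCne'
      exact hw (h' ▸ (mem_univ w))
  have : ¬ C ⊆ interior C := by
    intro h
    have : C = interior C := subset_antisymm h interior_subset
    exact hCnotopen (this ▸ isOpen_interior)
  obtain ⟨c, hcC, hcint⟩ := not_subset.mp this
  -- half unit
  set hm := D.mid e1 e2 with hhm
  have hms := D.mid_spec e1 e2
  have hstr := mid_betw_strict he
  -- c dominates each step by a full unit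
  have hkey : ∀ i, D.S c (t i) e1 e2 := by
    intro i
    have h1 : D.S c (t i) (t (i+1)) (t i) := (D.a1 c (t (i+1)) (t i)).mpr (hcC (i+1))
    exact D.trans _ _ _ _ _ _ h1 (ht i).1
  -- find c' with c - c' = e1 - hm
  obtain ⟨c', hc'⟩ : ∃ c', D.E hm e1 c' c := by
    apply solv2
    · exact ⟨c, L3'.mpr hstr.1.1⟩
    · refine ⟨t 0, ?_⟩
      have h1 : D.S c (t 0) e1 hm := by
        have h2 : D.S e1 e2 e1 hm := L4.mpr hstr.2.1
        exact D.trans _ _ _ _ _ _ (hkey 0) h2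
      exact G1 h1
  have hEcc' : D.E c c' e1 hm := Erev hc'
  have hcc' : D.Rs c c' := posStep hEcc' hstr.1
  have hc'bound : ∀ i, D.R c' (t i) := by
    intro i
    have h1 : D.S c e1 (t i) e2 := G2 (hkey i)
    have h2 : D.S c' hm c e1 := (Ecross hEcc').2
    have h3 : D.S c' hm (t i) e2 := D.trans _ _ _ _ _ _ h2 h1
    have h4 : D.S c' (t i) hm e2 := G2 h3
    have h5 : D.S hm e2 (t i) (t i) := L3.mpr hstr.2.1
    exact L3.mp (D.trans _ _ _ _ _ _ h4 h5)
  set W : Set X := {w | ¬ D.R c' w} with hW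
  have hWopen : IsOpen W := (isClosed_R' c').isOpen_compl
  have hWsub : W ⊆ C := by
    intro w hw i
    have hwc' : D.R w c' := (D.rcomp c' w).resolve_left hw
    exact D.rtrans _ _ _ hwc' (hc'bound i)
  exact hcint (mem_interior.mpr ⟨W, hWsub, hWopen, hcc'.2⟩)

end Mid


section Grid
variable [ConnectedSpace X]
variable (D)

/-- dyadic mix grid : gmix p q k n is the point at parameter n/2^k between p (n=0) and q -/
noncomputable def gmix (p q : X) : ℕ → ℕ → X
  | 0 => fun n => if n = 0 then p else q
  | k+1 => fun n =>
    if n % 2 = 0 then gmix p q k (n/2)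
    else D.mid (gmix p q k (n/2+1)) (gmix p q k (n/2))

variable {D}

lemma gmix_zero_eq (p q : X) (n : ℕ) : D.gmix p q 0 n = if n = 0 then p else q := rfl

lemma gmix_succ_eq (p q : X) (k n : ℕ) : D.gmix p q (k+1) n =
    (if n % 2 = 0 then D.gmix p q k (n/2)
     else D.mid (D.gmix p q k (n/2+1)) (D.gmix p q k (n/2))) := rfl

lemma gmix_zero (p q : X) : ∀ k, D.gmix p q k 0 = p := by
  intro k
  induction k with
  | zero => simp [gmix_zero_eq]
  | succ k ih => simp [gmix_succ_eq, ih]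

lemma gmix_top (p q : X) : ∀ k, D.gmix p q k (2^k) = q := by
  intro k
  induction k with
  | zero => simp [gmix_zero_eq]
  | succ k ih =>
    have h1 : 2^(k+1) % 2 = 0 := by omega
    have h2 : 2^(k+1) / 2 = 2^k := by omega
    rw [gmix_succ_eq, if_pos h1, h2, ih]

variable (D)

/-- unit at scale k -/
noncomputable def hp (a0 b0 : X) (k : ℕ) : X := D.gmix b0 a0 k 1

variable {D}

lemma hp_zero (a0 b0 : X) : D.hp a0 b0 0 = a0 := by simp [hp, gmix_zero_eq]

lemma hp_succ (a0 b0 : X) (k : ℕ) :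
    D.hp a0 b0 (k+1) = D.mid (D.hp a0 b0 k) b0 := by
  show D.gmix b0 a0 (k+1) 1 = _
  rw [gmix_succ_eq]
  norm_num
  rw [gmix_zero]
  rfl

lemma hp_half (a0 b0 : X) (k : ℕ) :
    D.E (D.hp a0 b0 k) (D.hp a0 b0 (k+1)) (D.hp a0 b0 (k+1)) b0 := by
  rw [hp_succ]
  exact D.mid_spec _ _

lemma hp_pos {a0 b0 : X} (hab : D.Rs a0 b0) : ∀ k, D.Rs (D.hp a0 b0 k) b0 := by
  intro k
  induction k with
  | zero => rw [hp_zero]; exact hab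
  | succ k ih =>
    rw [hp_succ]
    exact (mid_betw_strict ih).2

/-- E-version of concatenation -/
lemma EL5 {a b c d e f : X} (h1 : D.E a b c d) (h2 : D.E b e d f) : D.E a e c f :=
  ⟨L5 h1.1 h2.1, L5 h1.2 h2.2⟩

/-- two half steps make a full step -/
lemma TWOSTEP {a0 b0 A B C : X} (k : ℕ)
    (h1 : D.E B A (D.hp a0 b0 (k+1)) b0) (h2 : D.E C B (D.hp a0 b0 (k+1)) b0) :
    D.E C A (D.hp a0 b0 k) b0 := by
  have hh := hp_half (D := D) a0 b0 k
  have h3 : D.E C B (D.hp a0 b0 k) (D.hp a0 b0 (k+1)) := Etrans h2 (Esymm hh)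
  exact EL5 h3 h1

/-- grid steps are equal to the unit at that scale -/
lemma gmix_step {a0 b0 : X} : ∀ m, ∀ j, j < 2^m →
    D.E (D.gmix b0 a0 m (j+1)) (D.gmix b0 a0 m j) (D.hp a0 b0 m) b0 := by
  intro m
  induction m with
  | zero =>
    intro j hj
    have : j = 0 := by omega
    subst this
    have e1 : D.gmix b0 a0 0 1 = a0 := by simp [gmix_zero_eq]
    have e2 : D.gmix b0 a0 0 0 = b0 := by simp [gmix_zero_eq]
    rw [e1, e2, hp_zero]
    exact Erefl _ _
  | succ m ih =>
    intro j hj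
    set t := j / 2 with hts
    have htm : t < 2^m := by
      have h2m : (2:ℕ)^(m+1) = 2 * 2^m := by ring
      omega
    have IH := ih t htm
    have hM := D.mid_spec (D.gmix b0 a0 m (t+1)) (D.gmix b0 a0 m t)
    have hm' := hp_half (D := D) a0 b0 m
    have hlow : D.E (D.mid (D.gmix b0 a0 m (t+1)) (D.gmix b0 a0 m t)) (D.gmix b0 a0 m t)
        (D.hp a0 b0 (m+1)) b0 := HALF IH hM hm'
    by_cases hpar : j % 2 = 0
    · have hj2 : j = 2*t := by omega
      have e1 : D.gmix b0 a0 (m+1) j = D.gmix b0 a0 m t := by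
        rw [gmix_succ_eq, if_pos hpar]
      have e2 : D.gmix b0 a0 (m+1) (j+1) =
          D.mid (D.gmix b0 a0 m (t+1)) (D.gmix b0 a0 m t) := by
        have h1 : (j+1) % 2 = 1 := by omega
        have h2 : (j+1) / 2 = t := by omega
        rw [gmix_succ_eq]
        simp [h1, h2]
      rw [e1, e2]
      exact hlow
    · have e2 : D.gmix b0 a0 (m+1) j =
          D.mid (D.gmix b0 a0 m (t+1)) (D.gmix b0 a0 m t) := by
        rw [gmix_succ_eq]
        simp only [hpar]
        simp
        rw [← hts]
      have e3 : D.gmix b0 a0 (m+1) (j+1) = D.gmix b0 a0 m (t+1) := by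
        have h1 : (j+1) % 2 = 0 := by omega
        have h2 : (j+1) / 2 = t+1 := by omega
        rw [gmix_succ_eq, if_pos h1, h2]
      rw [e2, e3]
      exact Etrans hM hlow

/-- grid is monotone -/
lemma gmix_mono {a0 b0 : X} (hab : D.Rs a0 b0) {m j j' : ℕ} (h : j ≤ j') (h' : j' ≤ 2^m) :
    D.R (D.gmix b0 a0 m j') (D.gmix b0 a0 m j) := by
  induction j' with
  | zero =>
    have : j = 0 := by omega
    subst this; exact Rrefl _
  | succ j' ihj =>
    rcases Nat.lt_or_ge j (j'+1) with hlt | hge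
    · have step := gmix_step (D := D) (a0 := a0) (b0 := b0) m j' (by omega)
      have hRs : D.Rs (D.gmix b0 a0 m (j'+1)) (D.gmix b0 a0 m j') :=
        posStep step (hp_pos hab m)
      exact D.rtrans _ _ _ hRs.1 (ihj (by omega) (by omega))
    · have : j = j'+1 := by omega
      subst this; exact Rrefl _

lemma gmix_mono_strict {a0 b0 : X} (hab : D.Rs a0 b0) {m j j' : ℕ} (h : j < j') (h' : j' ≤ 2^m) :
    D.Rs (D.gmix b0 a0 m j') (D.gmix b0 a0 m j) := by
  have step := gmix_step (D := D) (a0 := a0) (b0 := b0) m j (by omega)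
  have hRs : D.Rs (D.gmix b0 a0 m (j+1)) (D.gmix b0 a0 m j) := posStep step (hp_pos hab m)
  exact Rs_trans2 (gmix_mono hab (Nat.succ_le_of_lt h) h') hRs

end Grid



section Chains
variable [ConnectedSpace X]

/-- monotonicity along a chain with positive equal steps -/
lemma chain_mono {e1 e2 : X} (he : D.Rs e1 e2) {t : ℕ → X} {n : ℕ}
    (ht : ∀ i < n, D.E (t (i+1)) (t i) e1 e2) {i j : ℕ} (hij : i ≤ j) (hj : j ≤ n) :
    D.R (t j) (t i) := by
  induction j with
  | zero =>
    have : i = 0 := by omega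
    subst this; exact Rrefl _
  | succ j ihj =>
    rcases Nat.lt_or_ge i (j+1) with hlt | hge
    · have hRs : D.Rs (t (j+1)) (t j) := posStep (ht j (by omega)) he
      exact D.rtrans _ _ _ hRs.1 (ihj (by omega) (by omega))
    · have : i = j+1 := by omega
      subst this; exact Rrefl _

variable (D)

/-- q - p contains at least n steps of size (a0-b0)/2^k -/
def Ge (a0 b0 : X) (n k : ℕ) (p q : X) : Prop :=
  ∃ t : ℕ → X, t 0 = p ∧ (∀ i < n, D.E (t (i+1)) (t i) (D.hp a0 b0 k) b0) ∧ D.R q (t n)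

variable {D}

variable {a0 b0 : X}

lemma ge_zero {k : ℕ} {p q : X} (h : D.R q p) : D.Ge a0 b0 0 k p q :=
  ⟨fun _ => p, rfl, fun i hi => absurd hi (by omega), h⟩

lemma ge_weaken {n k : ℕ} {p q r : X} (h : D.Ge a0 b0 n k p q) (hr : D.R r q) :
    D.Ge a0 b0 n k p r := by
  obtain ⟨t, h0, hs, hb⟩ := h
  exact ⟨t, h0, hs, D.rtrans _ _ _ hr hb⟩

/-- transfer a chain to a bigger interval -/
lemma ge_mono (hab : D.Rs a0 b0) {n k : ℕ} {x y x' y' : X}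
    (hg : D.Ge a0 b0 n k x y) (hS : D.S y' x' y x) : D.Ge a0 b0 n k x' y' := by
  classical
  obtain ⟨t, ht0, hts, htb⟩ := hg
  set u1 := D.hp a0 b0 k with hu1
  have hu1pos : D.Rs u1 b0 := hp_pos hab k
  let nxt : ℕ → X → X := fun i s =>
    if h : ∃ s', D.E s' s u1 b0 ∧ D.S y' s' y (t (min (i+1) n)) then h.choose else s
  let t' : ℕ → X := fun i => Nat.rec x' nxt i
  have ht'succ : ∀ i, t' (i+1) = nxt i (t' i) := fun i => rfl
  have hstep : ∀ i, i < n → D.S y' (t' i) y (t (min i n)) →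
      (D.E (t' (i+1)) (t' i) u1 b0 ∧ D.S y' (t' (i+1)) y (t (min (i+1) n))) := by
    intro i hi hQ
    have hmin : min i n = i := by omega
    rw [hmin] at hQ
    have hex : ∃ s', D.E s' (t' i) u1 b0 ∧ D.S y' s' y (t (min (i+1) n)) := by
      have hRy : D.R y (t (i+1)) :=
        D.rtrans _ _ _ htb (chain_mono hu1pos hts (by omega) (le_refl n))
      have hbig : D.S y' (t' i) u1 b0 := by
        have h1 : D.S y (t i) (t (i+1)) (t i) := (D.a1 y (t (i+1)) (t i)).mpr hRy
        have h2 : D.S y (t i) u1 b0 := D.trans _ _ _ _ _ _ h1 (hts i hi).1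
        exact D.trans _ _ _ _ _ _ hQ h2
      obtain ⟨s', hs'⟩ : ∃ s', D.E b0 u1 (t' i) s' := by
        apply solv
        · exact ⟨t' i, L3'.mpr hu1pos.1⟩
        · exact ⟨y', G1 hbig⟩
      have hE : D.E s' (t' i) u1 b0 := Erev hs'
      refine ⟨s', hE, ?_⟩
      have hmin1 : min (i+1) n = i+1 := by omega
      rw [hmin1]
      exact SUBEQ hQ hE (hts i hi)
    rw [ht'succ i]
    show (D.E (nxt i (t' i)) (t' i) u1 b0 ∧ D.S y' (nxt i (t' i)) y (t (min (i+1) n)))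
    have : nxt i (t' i) = hex.choose := dif_pos hex
    rw [this]
    exact hex.choose_spec
  have hQ : ∀ i, D.S y' (t' i) y (t (min i n)) := by
    intro i
    induction i with
    | zero =>
      show D.S y' x' y (t (min 0 n))
      rw [Nat.zero_min, ht0]
      exact hS
    | succ i ih =>
      by_cases hi : i < n
      · exact (hstep i hi ih).2
      · have hmm : min (i+1) n = min i n := by omega
        rw [hmm, ht'succ i]
        by_cases hc : ∃ s', D.E s' (t' i) u1 b0 ∧ D.S y' s' y (t (min (i+1) n))
        · have : nxt i (t' i) = hc.choose := dif_pos hc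
          rw [this]
          have h2 := hc.choose_spec.2
          exact Eq.mp (congrArg (fun z => D.S y' (hc.choose) y (t z)) hmm) h2
        · have : nxt i (t' i) = t' i := dif_neg hc
          rw [this]
          exact ih
  refine ⟨t', rfl, fun i hi => (hstep i hi (hQ i)).1, ?_⟩
  have hQn := hQ n
  rw [min_self] at hQn
  have h1 : D.S y (t n) (t' n) (t' n) := L3.mpr htb
  exact L3.mp (D.trans _ _ _ _ _ _ hQn h1)

end Chains


section Chains2
variable [ConnectedSpace X]
variable {a0 b0 : X}

/-- extend a chain by one step -/
lemma ge_step1 (hab : D.Rs a0 b0) {m k : ℕ} {p w r : X}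
    (hg : D.Ge a0 b0 m k p w) (hS : D.S r w (D.hp a0 b0 k) b0) :
    D.Ge a0 b0 (m+1) k p r := by
  classical
  obtain ⟨t, ht0, hts, htb⟩ := hg
  set u1 := D.hp a0 b0 k with hu1
  have hu1pos : D.Rs u1 b0 := hp_pos hab k
  have hrm : D.S r (t m) u1 b0 := by
    have h1 : D.S r (t m) r w := L4.mpr htb
    exact D.trans _ _ _ _ _ _ h1 hS
  obtain ⟨s', hs'⟩ : ∃ s', D.E b0 u1 (t m) s' := by
    apply solv
    · exact ⟨t m, L3'.mpr hu1pos.1⟩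
    · exact ⟨r, G1 hrm⟩
  have hE : D.E s' (t m) u1 b0 := Erev hs'
  have hrs' : D.R r s' := by
    have h1 : D.S r (t m) s' (t m) := D.trans _ _ _ _ _ _ hrm hE.2
    exact (D.a1 r s' (t m)).mp h1
  refine ⟨fun i => if i ≤ m then t i else s', by simp [ht0], ?_, ?_⟩
  · intro i hi
    by_cases him : i < m
    · simp only [if_pos (by omega : i ≤ m), if_pos (by omega : i+1 ≤ m)]
      exact hts i him
    · have : i = m := by omega
      subst this
      simp only [if_pos (le_refl i), if_neg (by omega : ¬ i+1 ≤ i)]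
      exact hE
  · simp only [if_neg (by omega : ¬ m+1 ≤ m)]
    exact hrs'

/-- concatenate chains -/
lemma ge_concat (hab : D.Rs a0 b0) {n₁ n₂ k : ℕ} {p q r : X}
    (h1 : D.Ge a0 b0 n₁ k p q) (h2 : D.Ge a0 b0 n₂ k q r) :
    D.Ge a0 b0 (n₁+n₂) k p r := by
  induction n₂ generalizing r with
  | zero =>
    obtain ⟨s, hs0, _, hsb⟩ := h2
    rw [hs0] at hsb
    exact ge_weaken h1 hsb
  | succ n₂ ih =>
    obtain ⟨s, hs0, hss, hsb⟩ := h2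
    have hpre : D.Ge a0 b0 n₂ k q (s n₂) := ⟨s, hs0, fun i hi => hss i (by omega), Rrefl _⟩
    have hmid := ih hpre
    have hstep : D.S r (s n₂) (D.hp a0 b0 k) b0 := by
      have hr1 : D.S r (s n₂) (s (n₂+1)) (s n₂) := (D.a1 r (s (n₂+1)) (s n₂)).mpr hsb
      exact D.trans _ _ _ _ _ _ hr1 (hss n₂ (by omega)).1
    exact ge_step1 hab hmid hstep

/-- split a chain at an intermediate point -/
lemma ge_split (hab : D.Rs a0 b0) {n k : ℕ} {p q r : X}
    (hg : D.Ge a0 b0 n k p r) (hq : D.R q p) :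
    ∃ j ≤ n, D.Ge a0 b0 j k p q ∧ (j = n ∨ D.Ge a0 b0 (n-j-1) k q r) := by
  classical
  obtain ⟨t, ht0, hts, htb⟩ := hg
  set u1 := D.hp a0 b0 k with hu1
  have hu1pos : D.Rs u1 b0 := hp_pos hab k
  set j := Nat.findGreatest (fun i => D.R q (t i)) n with hj
  have hjn : j ≤ n := Nat.findGreatest_le n
  have hjq : D.R q (t j) :=
    Nat.findGreatest_spec (P := fun i => D.R q (t i)) (m := 0) (Nat.zero_le n)
      (by show D.R q (t 0); rw [ht0]; exact hq)
  refine ⟨j, hjn, ⟨t, ht0, fun i hi => hts i (by omega), hjq⟩, ?_⟩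
  by_cases hjeq : j = n
  · exact Or.inl hjeq
  · right
    have hnot : ¬ D.R q (t (j+1)) :=
      Nat.findGreatest_is_greatest (k := j+1) (by rw [← hj]; omega) (by omega)
    have hqs : D.Rs (t (j+1)) q := Rs_of_not hnot
    have hsuf : D.Ge a0 b0 (n-j-1) k (t (j+1)) r := by
      refine ⟨fun i => t (j+1+i), rfl, ?_, ?_⟩
      · intro i hi
        have h1 := hts (j+1+i) (by omega)
        show D.E (t (j+1+(i+1))) (t (j+1+i)) (D.hp a0 b0 k) b0
        have e : j+1+(i+1) = (j+1+i)+1 := by omega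
        rw [e]
        exact h1
      · show D.R r (t (j+1+(n-j-1)))
        have e : j+1+(n-j-1) = n := by omega
        rw [e]
        exact htb
    have hSS : D.S r q r (t (j+1)) := L4.mpr hqs.1
    exact ge_mono hab hsuf hSS

/-- refine a chain to the next finer scale -/
lemma ge_refine (hab : D.Rs a0 b0) {n k : ℕ} {p q : X}
    (hg : D.Ge a0 b0 n k p q) : D.Ge a0 b0 (2*n) (k+1) p q := by
  obtain ⟨t, ht0, hts, htb⟩ := hg
  refine ⟨fun j => if j % 2 = 0 then t (j/2) else D.mid (t (j/2+1)) (t (j/2)), by simp [ht0], ?_, ?_⟩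
  · intro i hi
    set m := i / 2 with hm
    have hmn : m < n := by omega
    have hM := D.mid_spec (t (m+1)) (t m)
    have hlow : D.E (D.mid (t (m+1)) (t m)) (t m) (D.hp a0 b0 (k+1)) b0 :=
      HALF (hts m hmn) hM (hp_half a0 b0 k)
    by_cases hpar : i % 2 = 0
    · have h1 : (i+1) % 2 = 1 := by omega
      have h2 : (i+1) / 2 = m := by omega
      simp only [if_pos hpar, h1, h2, if_neg (by omega : ¬ (1:ℕ) = 0)]
      simp only [← hm]
      exact hlow
    · have h1 : (i+1) % 2 = 0 := by omega
      have h2 : (i+1) / 2 = m+1 := by omega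
      simp only [if_neg hpar, if_pos h1, h2]
      exact Etrans hM hlow
  · have h1 : (2*n) % 2 = 0 := by omega
    have h2 : (2*n) / 2 = n := by omega
    simp only [if_pos h1, h2]
    exact htb

/-- coarsen a chain -/
lemma ge_halve (hab : D.Rs a0 b0) {n k : ℕ} {p q : X}
    (hg : D.Ge a0 b0 n (k+1) p q) : D.Ge a0 b0 (n/2) k p q := by
  obtain ⟨t, ht0, hts, htb⟩ := hg
  refine ⟨fun j => t (2*j), by simp [ht0], ?_, ?_⟩
  · intro i hi
    have e : 2*(i+1) = (2*i+1)+1 := by omega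
    show D.E (t (2*(i+1))) (t (2*i)) (D.hp a0 b0 k) b0
    rw [e]
    exact TWOSTEP k (hts (2*i) (by omega)) (hts (2*i+1) (by omega))
  · exact D.rtrans _ _ _ htb (chain_mono (hp_pos hab (k+1)) hts (by omega) (le_refl n))

lemma ge_down (hab : D.Rs a0 b0) {k : ℕ} : ∀ {n : ℕ} {p q : X},
    D.Ge a0 b0 n k p q → D.Ge a0 b0 (n / 2^k) 0 p q := by
  induction k with
  | zero => intro n p q h; simpa using h
  | succ k ih =>
    intro n p q h
    have h1 := ge_halve hab h
    have h2 := ih h1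
    have e : n / 2 / 2^k = n / 2^(k+1) := by
      rw [Nat.div_div_eq_div_mul]
      ring_nf
    rwa [e] at h2

/-- chains are bounded : the Archimedean property -/
lemma ge_bound (hab : D.Rs a0 b0) (p q : X) :
    ∃ N : ℕ, ∀ n k, D.Ge a0 b0 n k p q → (n:ℝ)/2^k ≤ (N:ℝ) + 1 := by
  classical
  -- first bound scale-0 chains
  suffices h : ∃ N : ℕ, ∀ n, D.Ge a0 b0 n 0 p q → n ≤ N by
    obtain ⟨N, hN⟩ := h
    refine ⟨N, fun n k hg => ?_⟩
    have h1 := ge_down hab hg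
    have h2 := hN _ h1
    have h3 : n < 2^k * (N+1) := by
      have hdm := Nat.div_add_mod n (2^k)
      have hmod : n % 2^k < 2^k := Nat.mod_lt _ (by positivity)
      have hA : 2^k * (n / 2^k) ≤ 2^k * N := Nat.mul_le_mul_left (2^k) h2
      have he : 2^k*(N+1) = 2^k*N + 2^k := by ring
      linarith [hdm, hmod, hA, he]
    rw [div_le_iff₀ (by positivity)]
    push_cast
    calc (n:ℝ) ≤ 2^k * (N+1) := by exact_mod_cast h3.le
    _ = ((N:ℝ)+1) * 2^k := by ring
  by_cases hqp : D.R q p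
  · -- greedy chain
    let nxt : ℕ → X → X := fun _ s =>
      if h : ∃ s', D.E s' s a0 b0 ∧ D.R q s' then h.choose else s
    let g : ℕ → X := fun i => Nat.rec p nxt i
    have hgsucc : ∀ i, g (i+1) = nxt i (g i) := fun _ => rfl
    have hext : ∀ i, D.S q (g i) a0 b0 → ∃ s', D.E s' (g i) a0 b0 ∧ D.R q s' := by
      intro i hS
      obtain ⟨s', hs'⟩ : ∃ s', D.E b0 a0 (g i) s' := by
        apply solv
        · exact ⟨g i, L3'.mpr hab.1⟩
        · exact ⟨q, G1 hS⟩
      have hE : D.E s' (g i) a0 b0 := Erev hs'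
      refine ⟨s', hE, ?_⟩
      have h1 : D.S q (g i) s' (g i) := D.trans _ _ _ _ _ _ hS hE.2
      exact (D.a1 q s' (g i)).mp h1
    have hterm : ∃ j, ¬ D.S q (g j) a0 b0 := by
      by_contra hc
      push_neg at hc
      have hsteps : ∀ i, D.E (g (i+1)) (g i) a0 b0 ∧ D.R q (g (i+1)) := by
        intro i
        have hex := hext i (hc i)
        rw [hgsucc i]
        have : nxt i (g i) = hex.choose := dif_pos hex
        rw [this]
        exact hex.choose_spec
      exact arch hab g (fun i => (hsteps i).1) (by
        intro i
        cases i with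
        | zero => exact hqp
        | succ i => exact (hsteps i).2)
    set j0 := Nat.find hterm with hj0
    refine ⟨j0, fun n hg => ?_⟩
    by_contra hn
    push_neg at hn
    obtain ⟨s, hs0, hss, hsb⟩ := hg
    -- below j0 the greedy chain is defined and ≈ any chain
    have hgsteps : ∀ i, i < j0 → D.E (g (i+1)) (g i) a0 b0 := by
      intro i hi
      have hSc : D.S q (g i) a0 b0 := by
        have := Nat.find_min hterm hi
        exact not_not.mp this
      have hex := hext i hSc
      rw [hgsucc i]
      have : nxt i (g i) = hex.choose := dif_pos hex
      rw [this]
      exact hex.choose_spec.1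
    have hequiv : ∀ i, i ≤ j0 → D.R (s i) (g i) ∧ D.R (g i) (s i) := by
      intro i
      induction i with
      | zero =>
        intro _
        rw [hs0]
        exact ⟨Rrefl p, Rrefl p⟩
      | succ i ihi =>
        intro hij
        have hprev := ihi (by omega)
        have hsstep : D.E (s (i+1)) (s i) a0 b0 := by
          have := hss i (by omega)
          rwa [hp_zero] at this
        have hgstep := hgsteps i (by omega)
        exact ⟨STEPLE hprev.1 hsstep hgstep, STEPLE hprev.2 hgstep hsstep⟩
    -- contradiction : q ≥ s (j0+1) forces S q (g j0) a0 b0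
    have hq1 : D.R q (s (j0+1)) := by
      have h0steps : ∀ i < n, D.E (s (i+1)) (s i) a0 b0 := by
        intro i hi
        have := hss i hi
        rwa [hp_zero] at this
      exact D.rtrans _ _ _ hsb (chain_mono hab h0steps (by omega) (le_refl n))
    have hSq : D.S q (s j0) a0 b0 := by
      have h1 : D.S q (s j0) (s (j0+1)) (s j0) := (D.a1 q (s (j0+1)) (s j0)).mpr hq1
      have h2 : D.E (s (j0+1)) (s j0) a0 b0 := by
        have := hss j0 (by omega)
        rwa [hp_zero] at this
      exact D.trans _ _ _ _ _ _ h1 h2.1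
    have hfinal : D.S q (g j0) a0 b0 := by
      have h1 : D.S q (g j0) q (s j0) := L4.mpr (hequiv j0 (le_refl j0)).1
      exact D.trans _ _ _ _ _ _ h1 hSq
    exact Nat.find_spec hterm hfinal
  · refine ⟨0, fun n hg => ?_⟩
    exfalso
    obtain ⟨s, hs0, hss, hsb⟩ := hg
    have h0steps : ∀ i < n, D.E (s (i+1)) (s i) a0 b0 := by
      intro i hi
      have := hss i hi
      rwa [hp_zero] at this
    have : D.R q (s 0) := D.rtrans _ _ _ hsb (chain_mono hab h0steps (by omega) (le_refl n))
    rw [hs0] at this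
    exact hqp this

variable (D)

/-- the measure of the interval (p,q) in units (a0,b0) -/
noncomputable def nuSet (a0 b0 p q : X) : Set ℝ :=
  {r | ∃ n k : ℕ, r = (n:ℝ) / 2^k ∧ D.Ge a0 b0 n k p q}

noncomputable def nu (a0 b0 p q : X) : ℝ := sSup (D.nuSet a0 b0 p q)

variable {D}

lemma nuSet_nonneg {p q : X} {r : ℝ} (h : r ∈ D.nuSet a0 b0 p q) : 0 ≤ r := by
  obtain ⟨n, k, rfl, _⟩ := h
  positivity

lemma nuSet_mem0 {p q : X} (h : D.R q p) : (0:ℝ) ∈ D.nuSet a0 b0 p q :=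
  ⟨0, 0, by norm_num, ge_zero h⟩

lemma nuSet_bdd (hab : D.Rs a0 b0) (p q : X) : BddAbove (D.nuSet a0 b0 p q) := by
  obtain ⟨N, hN⟩ := ge_bound hab p q
  exact ⟨(N:ℝ)+1, fun r hr => by obtain ⟨n, k, rfl, hg⟩ := hr; exact hN n k hg⟩

lemma nu_nonneg (hab : D.Rs a0 b0) {p q : X} (h : D.R q p) : 0 ≤ D.nu a0 b0 p q :=
  le_csSup (nuSet_bdd hab p q) (nuSet_mem0 h)

lemma ge_nu_le (hab : D.Rs a0 b0) {p q : X} {n k : ℕ} (h : D.Ge a0 b0 n k p q) :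
    (n:ℝ)/2^k ≤ D.nu a0 b0 p q :=
  le_csSup (nuSet_bdd hab p q) ⟨n, k, rfl, h⟩

lemma nu_le (hab : D.Rs a0 b0) {p q : X} {c : ℝ} (hq : D.R q p)
    (hc : ∀ n k, D.Ge a0 b0 n k p q → (n:ℝ)/2^k ≤ c) : D.nu a0 b0 p q ≤ c := by
  apply csSup_le ⟨0, nuSet_mem0 hq⟩
  rintro r ⟨n, k, rfl, hg⟩
  exact hc n k hg

end Chains2


section Count
variable [ConnectedSpace X]
variable {a0 b0 : X}

/-- summing 2^m consecutive steps of scale k+m gives one step of scale k -/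
lemma chain_sum : ∀ m : ℕ, ∀ {k n : ℕ} {t : ℕ → X},
    (∀ i < n, D.E (t (i+1)) (t i) (D.hp a0 b0 (k+m)) b0) →
    ∀ j, j + 2^m ≤ n → D.E (t (j + 2^m)) (t j) (D.hp a0 b0 k) b0 := by
  intro m
  induction m with
  | zero =>
    intro k n t ht j hj
    have := ht j (by omega)
    simpa using this
  | succ m ih =>
    intro k n t ht j hj
    have ht' : ∀ i < n, D.E (t (i+1)) (t i) (D.hp a0 b0 ((k+1)+m)) b0 := by
      intro i hi
      have e : (k+1)+m = k+(m+1) := by omega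
      rw [e]
      exact ht i hi
    have h2m : (2:ℕ)^(m+1) = 2^m + 2^m := by ring
    have hone : (1:ℕ) ≤ 2^m := Nat.one_le_two_pow
    have h1 := ih (k := k+1) ht' j (by omega)
    have h2 := ih (k := k+1) ht' (j + 2^m) (by omega)
    have e : j + 2^m + 2^m = j + 2^(m+1) := by omega
    rw [e] at h2
    exact TWOSTEP k h1 h2

lemma ge_refine_iter (hab : D.Rs a0 b0) {n k : ℕ} {p q : X}
    (hg : D.Ge a0 b0 n k p q) : ∀ d, D.Ge a0 b0 (n * 2^d) (k+d) p q := by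
  intro d
  induction d with
  | zero => simpa using hg
  | succ d ih =>
    have := ge_refine hab ih
    have e : 2 * (n * 2^d) = n * 2^(d+1) := by ring
    have e2 : k + d + 1 = k + (d+1) := by omega
    rwa [e, e2] at this

/-- counting : if q - p ≤ unit at scale k then any chain measures at most 2^-k -/
lemma ge_count (hab : D.Rs a0 b0) {k : ℕ} {p q : X}
    (hbound : D.S (D.hp a0 b0 k) b0 q p) :
    ∀ n k', D.Ge a0 b0 n k' p q → (n:ℝ)/2^k' ≤ 1/2^k := by
  -- core : scales k' ≥ k
  have core : ∀ m n, D.Ge a0 b0 n (k+m) p q → n ≤ 2^m := by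
    intro m n hg
    by_contra hn
    push_neg at hn
    obtain ⟨t, ht0, hts, htb⟩ := hg
    have hsum : D.E (t (2^m)) (t 0) (D.hp a0 b0 k) b0 := by
      have := chain_sum m hts 0 (by omega)
      rwa [zero_add] at this
    have hstepP : D.Rs (t (2^m+1)) (t (2^m)) := posStep (hts (2^m) (by omega)) (hp_pos hab (k+m))
    have hP1 : D.P (t (2^m+1)) (t (2^m)) (D.hp a0 b0 k) (D.hp a0 b0 k) := by
      refine ⟨L3.mpr hstepP.1, fun hc => hstepP.2 (L3'.mp hc)⟩
    have hP2 : D.P (t (2^m+1)) (t 0) (D.hp a0 b0 k) b0 := L5P1 hP1 hsum.1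
    have hRq : D.R q (t (2^m+1)) :=
      D.rtrans _ _ _ htb (chain_mono (hp_pos hab (k+m)) hts (by omega) (le_refl n))
    have hP3 : D.P q (t 0) (D.hp a0 b0 k) b0 := by
      have h1 : D.S q (t 0) (t (2^m+1)) (t 0) := (D.a1 q (t (2^m+1)) (t 0)).mpr hRq
      exact Ptrans2 h1 hP2
    rw [ht0] at hP3
    exact hP3.2 hbound
  intro n k' hg
  rcases le_or_gt k k' with hk | hk
  · obtain ⟨m, rfl⟩ := Nat.exists_eq_add_of_le hk
    have hnn := core m n hg
    have hle : (n:ℝ) ≤ 2^m := by exact_mod_cast hnn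
    rw [div_le_div_iff₀ (by positivity) (by positivity)]
    have e2 : (2:ℝ)^(k+m) = 2^k * 2^m := by rw [pow_add]
    nlinarith [pow_pos (show (0:ℝ)<2 by norm_num) k]
  · -- refine first
    have hg2 := ge_refine_iter hab hg (k - k')
    have e : k' + (k - k') = k := by omega
    rw [e] at hg2
    have hnn := core 0 _ hg2
    simp only [pow_zero] at hnn
    have hle : ((n * 2^(k-k') : ℕ) : ℝ) ≤ 1 := by exact_mod_cast hnn
    have hpos : (0:ℝ) < 2^k' := by positivity
    rw [div_le_div_iff₀ hpos (by positivity : (0:ℝ) < 2^k)]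
    push_cast at hle ⊢
    have e2 : (2:ℝ)^(k-k') * 2^k' = 2^k := by
      rw [← pow_add]
      congr 1
      omega
    nlinarith [hle, pow_pos (by norm_num : (0:ℝ) < 2) k', pow_pos (by norm_num : (0:ℝ) < 2) (k-k')]
end Count


section Pos
variable [ConnectedSpace X]
variable {a0 b0 : X}

/-- every strict difference dominates some dyadic unit -/
lemma pos_unit (hab : D.Rs a0 b0) {x y : X} (hxy : D.Rs x y) :
    ∃ k, D.S x y (D.hp a0 b0 k) b0 := by
  classical
  let nxt : ℕ → X → X := fun _ s =>
    if h : ∃ s', D.E s s' x y then h.choose else s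
  let g : ℕ → X := fun i => Nat.rec a0 nxt i
  have hgsucc : ∀ i, g (i+1) = nxt i (g i) := fun _ => rfl
  have hext : ∀ i, D.S (g i) b0 x y → ∃ s', D.E (g i) s' x y := by
    intro i hS
    obtain ⟨s', hs'⟩ : ∃ s', D.E x y (g i) s' := by
      apply solv
      · exact ⟨b0, hS⟩
      · exact ⟨g i, L3.mpr hxy.1⟩
    exact ⟨s', Esymm hs'⟩
  have hterm : ∃ j, ¬ D.S (g j) b0 x y := by
    by_contra hc
    push_neg at hc
    have hsteps : ∀ i, D.E (g i) (g (i+1)) x y := by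
      intro i
      have hex := hext i (hc i)
      rw [hgsucc i]
      have : nxt i (g i) = hex.choose := dif_pos hex
      rw [this]
      exact hex.choose_spec
    -- apply arch in the dual structure
    have hdu : (D.dual).Rs y x := dual_Rs.mpr hxy
    have hdsteps : ∀ i, (D.dual).E (g (i+1)) (g i) y x := by
      intro i
      exact dual_E.mpr (hsteps i)
    have hdbound : ∀ i, (D.dual).R b0 (g i) := by
      intro i
      show D.R (g i) b0
      have h1 : D.S (g i) b0 x y := hc i
      have h2 : D.S x y (g i) (g i) := L3.mpr hxy.1
      exact L3.mp (D.trans _ _ _ _ _ _ h1 h2)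
    exact arch (D := D.dual) hdu g hdsteps hdbound
  set j0 := Nat.find hterm with hj0
  rcases Nat.eq_zero_or_pos j0 with hz | hpos
  · refine ⟨0, ?_⟩
    have hnot := Nat.find_spec hterm
    rw [← hj0, hz] at hnot
    have : ¬ D.S a0 b0 x y := hnot
    rw [hp_zero]
    exact nS this
  · refine ⟨j0, ?_⟩
    by_contra hcon
    have hP : D.P (D.hp a0 b0 j0) b0 x y := nS' hcon
    have h2m : j0 + 1 ≤ 2^j0 := Nat.lt_two_pow_self (n := j0)
    have hsteps_lt : ∀ i, i < j0 → D.E (g i) (g (i+1)) x y := by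
      intro i hi
      have hSc : D.S (g i) b0 x y := not_not.mp (Nat.find_min hterm hi)
      have hex := hext i hSc
      rw [hgsucc i]
      have : nxt i (g i) = hex.choose := dif_pos hex
      rw [this]
      exact hex.choose_spec
    have hinv : ∀ i, i ≤ j0 → D.R (g i) (D.gmix b0 a0 j0 (2^j0 - i)) := by
      intro i
      induction i with
      | zero =>
        intro _
        show D.R a0 (D.gmix b0 a0 j0 (2^j0 - 0))
        rw [Nat.sub_zero, gmix_top]
        exact Rrefl _
      | succ i ihi =>
        intro hij
        have hprev := ihi (by omega)
        have hgrid := gmix_step (D := D) (a0 := a0) (b0 := b0) j0 (2^j0 - i - 1) (by omega)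
        have e : 2^j0 - i - 1 + 1 = 2^j0 - i := by omega
        rw [e] at hgrid
        have hsub := SUBLE hprev (hsteps_lt i (by omega)) hgrid hP.1
        have e2 : 2^j0 - i - 1 = 2^j0 - (i+1) := by omega
        rwa [e2] at hsub
    have hfin := hinv j0 (le_refl j0)
    have hmono : D.R (D.gmix b0 a0 j0 (2^j0 - j0)) (D.gmix b0 a0 j0 1) :=
      gmix_mono hab (by omega) (by omega)
    have hRhp : D.R (g j0) (D.hp a0 b0 j0) :=
      D.rtrans _ _ _ hfin hmono
    have hS1 : D.S (g j0) b0 (D.hp a0 b0 j0) b0 := (D.a1 (g j0) (D.hp a0 b0 j0) b0).mpr hRhp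
    exact Nat.find_spec hterm (D.trans _ _ _ _ _ _ hS1 hP.1)

end Pos


section NuLemmas
variable [ConnectedSpace X]
variable {a0 b0 : X}

lemma cast_div_eq {n k K : ℕ} (hk : k ≤ K) :
    ((n * 2^(K-k) : ℕ) : ℝ) / 2^K = (n:ℝ)/2^k := by
  push_cast
  rw [div_eq_div_iff (by positivity) (by positivity)]
  rw [mul_assoc, ← pow_add]
  congr 2
  omega

lemma nu_add (hab : D.Rs a0 b0) {p q r : X} (hpq : D.R q p) (hqr : D.R r q) :
    D.nu a0 b0 p q + D.nu a0 b0 q r = D.nu a0 b0 p r := by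
  have hrp : D.R r p := D.rtrans _ _ _ hqr hpq
  apply le_antisymm
  · -- superadditivity
    have h1 : ∀ x ∈ D.nuSet a0 b0 p q, ∀ y ∈ D.nuSet a0 b0 q r, x + y ≤ D.nu a0 b0 p r := by
      rintro x ⟨n1, k1, rfl, hg1⟩ y ⟨n2, k2, rfl, hg2⟩
      set K := max k1 k2 with hK
      have hg1' := ge_refine_iter hab hg1 (K - k1)
      have hg2' := ge_refine_iter hab hg2 (K - k2)
      have e1 : k1 + (K - k1) = K := by omega
      have e2 : k2 + (K - k2) = K := by omega
      rw [e1] at hg1'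
      rw [e2] at hg2'
      have hcat := ge_concat hab hg1' hg2'
      have hle := ge_nu_le hab hcat
      have ec1 : ((n1 * 2^(K-k1) : ℕ):ℝ)/2^K = (n1:ℝ)/2^k1 :=
        cast_div_eq (le_max_left k1 k2)
      have ec2 : ((n2 * 2^(K-k2) : ℕ):ℝ)/2^K = (n2:ℝ)/2^k2 :=
        cast_div_eq (le_max_right k1 k2)
      rw [← ec1, ← ec2]
      have heq : ((n1 * 2^(K-k1) : ℕ):ℝ)/2^K + ((n2 * 2^(K-k2) : ℕ):ℝ)/2^K =
          ((n1 * 2^(K-k1) + n2 * 2^(K-k2) : ℕ):ℝ)/2^K := by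
        push_cast; ring
      rw [heq]
      exact hle
    have hne1 : (D.nuSet a0 b0 p q).Nonempty := ⟨0, nuSet_mem0 hpq⟩
    have hne2 : (D.nuSet a0 b0 q r).Nonempty := ⟨0, nuSet_mem0 hqr⟩
    have h2 : D.nu a0 b0 p q ≤ D.nu a0 b0 p r - D.nu a0 b0 q r := by
      apply csSup_le hne1
      intro x hx
      have h3 : D.nu a0 b0 q r ≤ D.nu a0 b0 p r - x := by
        apply csSup_le hne2
        intro y hy
        linarith [h1 x hx y hy]
      linarith
    linarith
  · -- subadditivity
    apply csSup_le ⟨0, nuSet_mem0 hrp⟩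
    rintro x ⟨n, k, rfl, hg⟩
    have key : ∀ d : ℕ, (n:ℝ)/2^k ≤ D.nu a0 b0 p q + D.nu a0 b0 q r + 1/2^(k+d) := by
      intro d
      have hg' := ge_refine_iter hab hg d
      obtain ⟨j, hjn, hpre, hrest⟩ := ge_split hab hg' hpq
      have hj1 : (j:ℝ)/2^(k+d) ≤ D.nu a0 b0 p q := ge_nu_le hab hpre
      have hx : (n:ℝ)/2^k = ((n * 2^d : ℕ):ℝ)/2^(k+d) := by
        have h := cast_div_eq (n := n) (k := k) (K := k+d) (by omega)
        rw [show (k+d)-k = d by omega] at h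
        exact h.symm
      rcases hrest with hjeq | hsuf
      · subst hjeq
        rw [hx]
        have h0 : 0 ≤ D.nu a0 b0 q r := nu_nonneg hab hqr
        have h00 : (0:ℝ) ≤ 1/2^(k+d) := by positivity
        linarith
      · have hj2 : ((n * 2^d - j - 1 : ℕ):ℝ)/2^(k+d) ≤ D.nu a0 b0 q r := ge_nu_le hab hsuf
        rw [hx]
        have hnat : n*2^d ≤ j + (n*2^d - j - 1) + 1 := by omega
        have hc : ((n*2^d : ℕ):ℝ) ≤ (j:ℝ) + ((n*2^d - j - 1 : ℕ):ℝ) + 1 := by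
          exact_mod_cast hnat
        have hpow : (0:ℝ) < 2^(k+d) := by positivity
        calc ((n*2^d : ℕ):ℝ)/2^(k+d) ≤ ((j:ℝ) + ((n*2^d - j - 1 : ℕ):ℝ) + 1)/2^(k+d) := by
              gcongr
          _ = (j:ℝ)/2^(k+d) + ((n*2^d - j - 1 : ℕ):ℝ)/2^(k+d) + 1/2^(k+d) := by ring
          _ ≤ D.nu a0 b0 p q + D.nu a0 b0 q r + 1/2^(k+d) := by linarith
    apply le_of_forall_pos_le_add
    intro ε hε
    obtain ⟨d, hd⟩ := exists_pow_lt_of_lt_one hε (by norm_num : (1:ℝ)/2 < 1)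
    have h1 : (1:ℝ)/2^(k+d) ≤ ((1:ℝ)/2)^d := by
      rw [one_div_pow]
      apply div_le_div_of_nonneg_left (by norm_num) (by positivity)
      have : (2:ℝ)^d ≤ 2^(k+d) := by
        apply pow_le_pow_right₀ (by norm_num)
        omega
      linarith
    linarith [key d]

end NuLemmas



section NuCompare
variable [ConnectedSpace X]
variable {a0 b0 : X}

/-- comparison lemma : interval order matches measures -/
lemma nu_compare (hab : D.Rs a0 b0) {p q r s : X} (hqp : D.R q p) (hsr : D.R s r) :
    D.S q p s r ↔ D.nu a0 b0 r s ≤ D.nu a0 b0 p q := by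
  constructor
  · intro hS
    exact nu_le hab hsr (fun n k hg => ge_nu_le hab (ge_mono hab hg hS))
  · intro hle
    by_contra hns
    have hP : D.P s r q p := nS' hns
    obtain ⟨e', hE⟩ : ∃ e', D.E q p s e' := by
      apply solv
      · exact ⟨r, hP.1⟩
      · exact ⟨s, L3.mpr hqp⟩
    have hRse' : D.R s e' := by
      have h1 : D.S q p s s := L3.mpr hqp
      have h2 : D.S s e' s s := D.trans _ _ _ _ _ _ hE.2 h1
      exact L3.mp h2
    have hPs : D.P s r s e' := Ptrans1 hP hE.1
    have hRs : D.Rs e' r := ⟨L4.mp hPs.1, fun h => hPs.2 (L4.mpr h)⟩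
    obtain ⟨k, hk⟩ := pos_unit hab hRs
    have hGe1 : D.Ge a0 b0 1 k r e' := ge_step1 hab (ge_zero (Rrefl r)) hk
    have h1 : (1:ℝ)/2^k ≤ D.nu a0 b0 r e' := by
      have := ge_nu_le hab hGe1
      simpa using this
    have h2 : D.nu a0 b0 p q ≤ D.nu a0 b0 e' s :=
      nu_le hab hqp (fun n k' hg => ge_nu_le hab (ge_mono hab hg hE.2))
    have h3 := nu_add hab hRs.1 hRse'
    have hpos : (0:ℝ) < 1/2^k := by positivity
    linarith
end NuCompare

section NuUnit
variable [ConnectedSpace X]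
variable {a0 b0 : X}

/-- a single unit step has measure exactly 2^(-k) -/
lemma nu_unit (hab : D.Rs a0 b0) {p q : X} {k : ℕ} (hE : D.E q p (D.hp a0 b0 k) b0) :
    D.nu a0 b0 p q = 1/2^k := by
  have hqp : D.Rs q p := posStep hE (hp_pos hab k)
  apply le_antisymm
  · exact nu_le hab hqp.1 (ge_count hab hE.2)
  · have hGe1 : D.Ge a0 b0 1 k p q := ge_step1 hab (ge_zero (Rrefl p)) hE.1
    have := ge_nu_le hab hGe1
    simpa using this

/-- equal intervals have equal measure -/
lemma nu_congr (hab : D.Rs a0 b0) {p q r s : X} (hqp : D.R q p) (hsr : D.R s r)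
    (hE : D.E q p s r) : D.nu a0 b0 p q = D.nu a0 b0 r s :=
  le_antisymm ((nu_compare hab hsr hqp).mp hE.2) ((nu_compare hab hqp hsr).mp hE.1)

/-- points with zero distance -/
lemma nu_zero_of_equiv (hab : D.Rs a0 b0) {p q : X} (h1 : D.R q p) (h2 : D.R p q) :
    D.nu a0 b0 p q = 0 := by
  apply le_antisymm
  · apply nu_le hab h1
    intro n k hg
    rcases Nat.eq_zero_or_pos n with hn | hn
    · subst hn; simp
    · exfalso
      obtain ⟨t, ht0, hts, htb⟩ := hg
      have hRs1 : D.Rs (t 1) (t 0) := posStep (hts 0 (by omega)) (hp_pos hab k)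
      have hq1 : D.R q (t 1) :=
        D.rtrans _ _ _ htb (chain_mono (hp_pos hab k) hts (by omega) (le_refl n))
      rw [ht0] at hRs1
      exact hRs1.2 (D.rtrans _ _ _ h2 hq1)
  · exact nu_nonneg hab h1

end NuUnit


section U
variable [ConnectedSpace X]

variable (D)

open Classical in
noncomputable def uu (a0 b0 : X) (x : X) : ℝ :=
  if D.R x b0 then D.nu a0 b0 b0 x else - D.nu a0 b0 x b0

variable {D}
variable {a0 b0 : X}

lemma uu_b0 (hab : D.Rs a0 b0) : D.uu a0 b0 b0 = 0 := by
  rw [uu, if_pos (Rrefl b0)]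
  exact nu_zero_of_equiv hab (Rrefl b0) (Rrefl b0)

lemma uu_diff (hab : D.Rs a0 b0) {x y : X} (hxy : D.R x y) :
    D.uu a0 b0 x - D.uu a0 b0 y = D.nu a0 b0 y x := by
  by_cases hyb : D.R y b0
  · have hxb : D.R x b0 := D.rtrans _ _ _ hxy hyb
    rw [uu, uu, if_pos hxb, if_pos hyb]
    have := nu_add hab hyb hxy
    linarith
  · have hby : D.Rs b0 y := Rs_of_not hyb
    by_cases hxb : D.R x b0
    · rw [uu, uu, if_pos hxb, if_neg hyb]
      have := nu_add hab hby.1 hxb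
      linarith
    · rw [uu, uu, if_neg hxb, if_neg hyb]
      have hbx : D.Rs b0 x := Rs_of_not hxb
      have := nu_add hab hxy hbx.1
      linarith

lemma nu_pos_strict (hab : D.Rs a0 b0) {x y : X} (hxy : D.Rs x y) :
    0 < D.nu a0 b0 y x := by
  obtain ⟨k, hk⟩ := pos_unit hab hxy
  have hGe : D.Ge a0 b0 1 k y x := ge_step1 hab (ge_zero (Rrefl y)) hk
  have h1 := ge_nu_le hab hGe
  have h2 : (0:ℝ) < 1/2^k := by positivity
  have h3 : ((1:ℕ):ℝ)/2^k = 1/2^k := by norm_num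
  linarith [h1, h3 ▸ h1]

lemma uu_S_iff (hab : D.Rs a0 b0) (x y z w : X) :
    D.S x y z w ↔ D.uu a0 b0 x - D.uu a0 b0 y ≥ D.uu a0 b0 z - D.uu a0 b0 w := by
  by_cases hxy : D.R x y
  · by_cases hzw : D.R z w
    · rw [uu_diff hab hxy, uu_diff hab hzw]
      exact nu_compare hab hxy hzw
    · have hwz : D.Rs w z := Rs_of_not hzw
      have hL : D.S x y z w := by
        have h1 : D.S x y x x := L3.mpr hxy
        have h2 : D.S x x z w := L3'.mpr hwz.1
        exact D.trans _ _ _ _ _ _ h1 h2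
      have hR : D.uu a0 b0 x - D.uu a0 b0 y ≥ D.uu a0 b0 z - D.uu a0 b0 w := by
        have h1 : D.uu a0 b0 x - D.uu a0 b0 y = D.nu a0 b0 y x := uu_diff hab hxy
        have h2 : D.uu a0 b0 w - D.uu a0 b0 z = D.nu a0 b0 z w := uu_diff hab hwz.1
        have h3 := nu_nonneg hab hxy
        have h4 := nu_pos_strict hab hwz
        linarith
      exact ⟨fun _ => hR, fun _ => hL⟩
  · have hyx : D.Rs y x := Rs_of_not hxy
    by_cases hzw : D.R z w
    · constructor
      · intro hS
        exfalso
        have h1 : D.S z w z z := L3.mpr hzw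
        have h2 : D.S x y z z := D.trans _ _ _ _ _ _ hS h1
        exact hxy (L3.mp h2)
      · intro hge
        exfalso
        have h1 : D.uu a0 b0 y - D.uu a0 b0 x = D.nu a0 b0 x y := uu_diff hab hyx.1
        have h2 : D.uu a0 b0 z - D.uu a0 b0 w = D.nu a0 b0 w z := uu_diff hab hzw
        have h3 := nu_pos_strict hab hyx
        have h4 := nu_nonneg hab hzw
        linarith
    · have hwz : D.Rs w z := Rs_of_not hzw
      have h1 : D.uu a0 b0 y - D.uu a0 b0 x = D.nu a0 b0 x y := uu_diff hab hyx.1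
      have h2 : D.uu a0 b0 w - D.uu a0 b0 z = D.nu a0 b0 z w := uu_diff hab hwz.1
      constructor
      · intro hS
        have := (nu_compare hab hwz.1 hyx.1).mp (G1 hS)
        linarith
      · intro hge
        have : D.nu a0 b0 x y ≤ D.nu a0 b0 z w := by linarith
        exact G1 ((nu_compare hab hwz.1 hyx.1).mpr this)

lemma uu_R_iff (hab : D.Rs a0 b0) (x y : X) :
    D.R x y ↔ D.uu a0 b0 x ≥ D.uu a0 b0 y := by
  constructor
  · intro h
    have h1 := uu_diff hab h
    have h2 := nu_nonneg hab h
    linarith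
  · intro h
    by_contra hc
    have hyx : D.Rs y x := Rs_of_not hc
    have h1 := uu_diff hab hyx.1
    have h2 := nu_pos_strict hab hyx
    linarith

lemma uu_a0 (hab : D.Rs a0 b0) : D.uu a0 b0 a0 = 1 := by
  rw [uu, if_pos hab.1]
  apply le_antisymm
  · have hb : D.S (D.hp a0 b0 0) b0 a0 b0 := by
      rw [hp_zero]; exact S_refl _ _
    have := nu_le hab hab.1 (ge_count hab hb)
    simpa using this
  · have hS : D.S a0 b0 (D.hp a0 b0 0) b0 := by
      rw [hp_zero]; exact S_refl _ _
    have hGe : D.Ge a0 b0 1 0 b0 a0 := ge_step1 hab (ge_zero (Rrefl b0)) hS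
    have := ge_nu_le hab hGe
    simpa using this

lemma exists_pow_small {δ : ℝ} (hδ : 0 < δ) : ∃ k : ℕ, (1:ℝ)/2^k < δ := by
  obtain ⟨k, hk⟩ := exists_pow_lt_of_lt_one hδ (by norm_num : (1:ℝ)/2 < 1)
  refine ⟨k, ?_⟩
  have : ((1:ℝ)/2)^k = 1/2^k := by
    rw [div_pow, one_pow]
  linarith [this ▸ hk]

lemma uu_nbhd_lower (hab : D.Rs a0 b0) (x₀ : X) (c : ℝ) (hc : c < D.uu a0 b0 x₀) :
    ∃ V : Set X, IsOpen V ∧ x₀ ∈ V ∧ ∀ x ∈ V, c < D.uu a0 b0 x := by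
  obtain ⟨k, hk⟩ := exists_pow_small (show 0 < D.uu a0 b0 x₀ - c by linarith)
  by_cases hA : ∃ t, D.S x₀ t (D.hp a0 b0 k) b0
  · obtain ⟨t, ht⟩ : ∃ t, D.E (D.hp a0 b0 k) b0 x₀ t := by
      apply solv
      · exact hA
      · exact ⟨x₀, L3.mpr (hp_pos hab k).1⟩
    have hE : D.E x₀ t (D.hp a0 b0 k) b0 := Esymm ht
    have hsx : D.Rs x₀ t := posStep hE (hp_pos hab k)
    have hut : D.uu a0 b0 t = D.uu a0 b0 x₀ - 1/2^k := by
      have h1 := uu_diff hab hsx.1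
      have h2 := nu_unit hab hE
      linarith
    refine ⟨{x | ¬ D.R t x}, (isClosed_R' t).isOpen_compl, hsx.2, ?_⟩
    intro x hx
    have hxt : D.R x t := (D.rcomp t x).resolve_left hx
    have := (uu_R_iff hab x t).mp hxt
    linarith
  · refine ⟨univ, isOpen_univ, mem_univ _, ?_⟩
    intro x _
    push_neg at hA
    by_cases hxx : D.R x x₀
    · have := (uu_R_iff hab x x₀).mp hxx
      linarith
    · have hx₀x : D.Rs x₀ x := Rs_of_not hxx
      have hb : D.S (D.hp a0 b0 k) b0 x₀ x := nS (hA x)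
      have hle : D.nu a0 b0 x x₀ ≤ 1/2^k := nu_le hab hx₀x.1 (ge_count hab hb)
      have := uu_diff hab hx₀x.1
      linarith

lemma uu_nbhd_upper (hab : D.Rs a0 b0) (x₀ : X) (c : ℝ) (hc : D.uu a0 b0 x₀ < c) :
    ∃ V : Set X, IsOpen V ∧ x₀ ∈ V ∧ ∀ x ∈ V, D.uu a0 b0 x < c := by
  obtain ⟨k, hk⟩ := exists_pow_small (show 0 < c - D.uu a0 b0 x₀ by linarith)
  by_cases hA : ∃ t, D.S t x₀ (D.hp a0 b0 k) b0
  · obtain ⟨t', ht'A⟩ := hA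
    obtain ⟨t, ht⟩ : ∃ t, D.E b0 (D.hp a0 b0 k) x₀ t := by
      apply solv
      · exact ⟨x₀, L3'.mpr (hp_pos hab k).1⟩
      · exact ⟨t', G1 ht'A⟩
    have hE : D.E t x₀ (D.hp a0 b0 k) b0 := Erev ht
    have hsx : D.Rs t x₀ := posStep hE (hp_pos hab k)
    have hut : D.uu a0 b0 t = D.uu a0 b0 x₀ + 1/2^k := by
      have h1 := uu_diff hab hsx.1
      have h2 := nu_unit hab hE
      linarith
    refine ⟨{x | ¬ D.R x t}, (isClosed_R t).isOpen_compl, hsx.2, ?_⟩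
    intro x hx
    have hxt : D.R t x := (D.rcomp x t).resolve_left hx
    have := (uu_R_iff hab t x).mp hxt
    linarith
  · refine ⟨univ, isOpen_univ, mem_univ _, ?_⟩
    intro x _
    push_neg at hA
    by_cases hxx : D.R x₀ x
    · have := (uu_R_iff hab x₀ x).mp hxx
      linarith
    · have hxx₀ : D.Rs x x₀ := Rs_of_not hxx
      have hb : D.S (D.hp a0 b0 k) b0 x x₀ := nS (hA x)
      have hle : D.nu a0 b0 x₀ x ≤ 1/2^k := nu_le hab hxx₀.1 (ge_count hab hb)
      have := uu_diff hab hxx₀.1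
      linarith

lemma uu_cont (hab : D.Rs a0 b0) : Continuous (D.uu a0 b0) := by
  rw [continuous_iff_continuousAt]
  intro x₀
  apply tendsto_order.2
  constructor
  · intro c hc
    obtain ⟨V, hVo, hVx, hVs⟩ := uu_nbhd_lower hab x₀ c hc
    exact Filter.eventually_of_mem (hVo.mem_nhds hVx) hVs
  · intro c hc
    obtain ⟨V, hVo, hVx, hVs⟩ := uu_nbhd_upper hab x₀ c hc
    exact Filter.eventually_of_mem (hVo.mem_nhds hVx) hVs

end U


section Unique
variable [ConnectedSpace X]
variable {a0 b0 : X}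

lemma gmix_affine {f : X → ℝ} (hf : ∀ x y, f (D.mid x y) = (f x + f y)/2) (p q : X) :
    ∀ k n, n ≤ 2^k → f (D.gmix p q k n) = (1 - (n:ℝ)/2^k) * f p + ((n:ℝ)/2^k) * f q := by
  intro k
  induction k with
  | zero =>
    intro n hn
    interval_cases n
    · rw [gmix_zero_eq]
      norm_num
    · rw [gmix_zero_eq]
      norm_num
  | succ k ih =>
    intro n hn
    set t := n / 2 with htdef
    have h2k : (2:ℕ)^(k+1) = 2 * 2^k := by ring
    by_cases hpar : n % 2 = 0
    · have hn2 : n = 2*t := by omega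
      have htle : t ≤ 2^k := by omega
      rw [gmix_succ_eq, if_pos hpar]
      rw [ih t htle]
      have hc : ((n:ℝ))/2^(k+1) = (t:ℝ)/2^k := by
        rw [hn2]
        push_cast
        rw [pow_succ]
        field_simp
      rw [hc]
    · have hn2 : n = 2*t+1 := by omega
      have htle : t ≤ 2^k := by omega
      have htle1 : t+1 ≤ 2^k := by omega
      rw [gmix_succ_eq, if_neg hpar]
      rw [hf, ih (t+1) htle1, ih t htle]
      have hpos : (0:ℝ) < 2^k := by positivity
      have hc : ((n:ℝ)) = 2*(t:ℝ)+1 := by rw [hn2]; push_cast; ring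
      rw [hc, pow_succ]
      field_simp
      push_cast
      ring

lemma rep_aux (hab : D.Rs a0 b0) {u w : X → ℝ}
    (hu_mid : ∀ x y, u (D.mid x y) = (u x + u y)/2)
    (hw_mid : ∀ x y, w (D.mid x y) = (w x + w y)/2)
    (hu_ord : ∀ x y, D.R x y ↔ u x ≥ u y)
    (hw_ord : ∀ x y, D.R x y ↔ w x ≥ w y)
    (hub : u b0 = 0) (hua : u a0 = 1) (hwb : w b0 = 0) (hwa : w a0 = 1) :
    ∀ x, ¬ (u x < w x) := by
  have key : ∀ P : X, 0 ≤ u P → w P ≤ 1 → u P < w P → False := by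
    intro P hP1 hP2 hlt
    obtain ⟨m, hm⟩ := exists_pow_small (show 0 < w P - u P by linarith)
    set j := Nat.floor (u P * 2^m) + 1 with hjdef
    have hfl : (Nat.floor (u P * 2^m) : ℝ) ≤ u P * 2^m :=
      Nat.floor_le (by positivity)
    have hfl2 : u P * 2^m < (j:ℝ) := by
      rw [hjdef]
      push_cast
      exact Nat.lt_floor_add_one _
    have hmpos : (0:ℝ) < 2^m := by positivity
    have hup : u P < (j:ℝ)/2^m := by
      rw [lt_div_iff₀ hmpos]
      linarith
    have hdn : (j:ℝ)/2^m < w P := by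
      rw [div_lt_iff₀ hmpos]
      have hj1 : (j:ℝ) ≤ u P * 2^m + 1 := by
        rw [hjdef]; push_cast; linarith
      have h1 : (1:ℝ) < (w P - u P) * 2^m := by
        rw [show (1:ℝ)/2^m < w P - u P ↔ 1 < (w P - u P) * 2^m from div_lt_iff₀ hmpos] at hm
        exact hm
      nlinarith
    have hjle : j ≤ 2^m := by
      have : (j:ℝ) < 2^m := by
        have : (j:ℝ)/2^m < 1 := lt_of_lt_of_le hdn hP2
        rw [div_lt_one hmpos] at this
        exact this
      exact_mod_cast this.le
    set G := D.gmix b0 a0 m j with hG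
    have huG : u G = (j:ℝ)/2^m := by
      rw [hG, gmix_affine hu_mid b0 a0 m j hjle, hub, hua]
      ring
    have hwG : w G = (j:ℝ)/2^m := by
      rw [hG, gmix_affine hw_mid b0 a0 m j hjle, hwb, hwa]
      ring
    have h1 : ¬ D.R P G := by
      rw [hu_ord]
      rw [huG]
      linarith
    have h2 : D.R P G := by
      rw [hw_ord, hwG]
      linarith
    exact h1 h2
  intro x hlt
  by_cases hxb : D.R x b0
  · have hux : 0 ≤ u x := by
      have := (hu_ord x b0).mp hxb
      linarith
    obtain ⟨K, hK⟩ := pow_unbounded_of_one_lt (w x) (by norm_num : (1:ℝ) < 2)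
    have hKpos : (0:ℝ) < 2^K := by positivity
    set P := D.gmix b0 x K 1 with hP
    have h1le : 1 ≤ 2^K := Nat.one_le_two_pow
    have huP : u P = u x / 2^K := by
      rw [hP, gmix_affine hu_mid b0 x K 1 h1le, hub]
      push_cast
      ring
    have hwP : w P = w x / 2^K := by
      rw [hP, gmix_affine hw_mid b0 x K 1 h1le, hwb]
      push_cast
      ring
    apply key P
    · rw [huP]; positivity
    · rw [hwP, div_le_one hKpos]; linarith
    · rw [huP, hwP, div_lt_div_iff₀ hKpos hKpos]
      nlinarith
  · have hbx : D.Rs b0 x := Rs_of_not hxb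
    have hux : u x < 0 := by
      by_contra h
      push_neg at h
      exact hxb ((hu_ord x b0).mpr (by rw [hub]; exact h))
    have hwx : w x < 0 := by
      by_contra h
      push_neg at h
      exact hxb ((hw_ord x b0).mpr (by rw [hwb]; exact h))
    obtain ⟨K, hK⟩ := pow_unbounded_of_one_lt (1 - u x) (by norm_num : (1:ℝ) < 2)
    have hKpos : (0:ℝ) < 2^K := by positivity
    have h1le : (1:ℕ) ≤ 2^K := Nat.one_le_two_pow
    set n := 2^K - 1 with hndef
    have hnle : n ≤ 2^K := by omega
    have hcast : ((n:ℕ):ℝ) = 2^K - 1 := by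
      rw [hndef]
      push_cast [Nat.cast_sub h1le]
      ring
    set P := D.gmix x a0 K n with hP
    have huP : u P = (u x + 2^K - 1)/2^K := by
      rw [hP, gmix_affine hu_mid x a0 K n hnle, hua, hcast]
      field_simp
      ring
    have hwP : w P = (w x + 2^K - 1)/2^K := by
      rw [hP, gmix_affine hw_mid x a0 K n hnle, hwa, hcast]
      field_simp
      ring
    apply key P
    · rw [huP]
      apply div_nonneg ?_ hKpos.le
      linarith
    · rw [hwP, div_le_one hKpos]
      linarith
    · rw [huP, hwP, div_lt_div_iff₀ hKpos hKpos]
      nlinarith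

end Unique
end DS


theorem stmt16 {X : Type*} [TopologicalSpace X] [ConnectedSpace X]
    [TopologicalSpace.SeparableSpace X]
    (R : X → X → Prop) (S : X → X → X → X → Prop)
    (hRcomp : ∀ a b : X, R a b ∨ R b a)
    (hRtrans : ∀ a b c : X, R a b → R b c → R a c)
    (hScomp : ∀ a b c d : X, S a b c d ∨ S c d a b)
    (hStrans : ∀ a b c d e f : X, S a b c d → S c d e f → S a b e f)
    (hA2 : ∀ x y z w : X, (S x y z w ∧ S z w x y) ↔ (S x z y w ∧ S y w x z))
    (hA3 : IsClosed {p : X × X × X × X | S p.1 p.2.1 p.2.2.1 p.2.2.2})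
    (hA1 : ∀ a b c : X, S a c b c ↔ R a b) :
    ∃ u : X → ℝ, Continuous u ∧
      (∀ x y : X, R x y ↔ u x ≥ u y) ∧
      (∀ x y z w : X, S x y z w ↔ u x - u y ≥ u z - u w) ∧
      ∀ v : X → ℝ,
        ((∀ x y : X, R x y ↔ v x ≥ v y) ∧
         (∀ x y z w : X, S x y z w ↔ v x - v y ≥ v z - v w)) →
        ∃ α β : ℝ, α > 0 ∧ ∀ x : X, v x = α * u x + β := by
  classical
  set D : DS X := ⟨R, S, hRcomp, hRtrans, hScomp, hStrans, hA2, hA3, hA1⟩ with hD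
  have hDR : ∀ x y, D.R x y ↔ R x y := fun _ _ => Iff.rfl
  have hDS : ∀ x y z w, D.S x y z w ↔ S x y z w := fun _ _ _ _ => Iff.rfl
  by_cases htriv : ∀ x y : X, R x y
  · refine ⟨fun _ => 0, continuous_const, ?_, ?_, ?_⟩
    · intro x y
      simp [htriv x y]
    · intro x y z w
      have hS : S x y z w := by
        have h1 : D.S x y x x := DS.L3.mpr (htriv x y)
        have h2 : D.S x x z w := DS.L3'.mpr (htriv w z)
        exact D.trans _ _ _ _ _ _ h1 h2
      simp [hS]
    · intro v ⟨hvR, hvS⟩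
      have x₀ : X := Classical.arbitrary X
      refine ⟨1, v x₀, one_pos, fun x => ?_⟩
      have h1 : v x ≥ v x₀ := (hvR x x₀).mp (htriv x x₀)
      have h2 : v x₀ ≥ v x := (hvR x₀ x).mp (htriv x₀ x)
      simp
      linarith
  · push_neg at htriv
    obtain ⟨c, d, hcd⟩ := htriv
    set a0 := d with ha0
    set b0 := c with hb0
    have hab : D.Rs a0 b0 := DS.Rs_of_not hcd
    refine ⟨D.uu a0 b0, DS.uu_cont hab, ?_, ?_, ?_⟩
    · exact fun x y => DS.uu_R_iff hab x y
    · exact fun x y z w => DS.uu_S_iff hab x y z w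
    · intro v ⟨hvR, hvS⟩
      set α := v a0 - v b0 with hα
      have hαpos : 0 < α := by
        have h1 : v a0 ≥ v b0 := (hvR a0 b0).mp hab.1
        have h2 : ¬ (v b0 ≥ v a0) := fun h => hab.2 ((hvR b0 a0).mpr h)
        push_neg at h2
        simp [hα]
        linarith
      refine ⟨α, v b0, hαpos, fun x => ?_⟩
      set w : X → ℝ := fun t => (v t - v b0)/α with hw
      -- midpoint affinity of v
      have hv_mid : ∀ x y, v (D.mid x y) = (v x + v y)/2 := by
        intro x y
        have hE := D.mid_spec x y
        have h1 := (hvS x (D.mid x y) (D.mid x y) y).mp hE.1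
        have h2 := (hvS (D.mid x y) y x (D.mid x y)).mp hE.2
        linarith
      have hu_mid : ∀ x y, D.uu a0 b0 (D.mid x y) = (D.uu a0 b0 x + D.uu a0 b0 y)/2 := by
        intro x y
        have hE := D.mid_spec x y
        have h1 := (DS.uu_S_iff hab x (D.mid x y) (D.mid x y) y).mp hE.1
        have h2 := (DS.uu_S_iff hab (D.mid x y) y x (D.mid x y)).mp hE.2
        linarith
      have hw_mid : ∀ x y, w (D.mid x y) = (w x + w y)/2 := by
        intro x y
        simp only [hw]
        rw [hv_mid]
        field_simp
        ring
      have hw_ord : ∀ x y, D.R x y ↔ w x ≥ w y := by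
        intro x y
        rw [hDR, hvR]
        simp only [hw]
        constructor
        · intro h
          rw [ge_iff_le, div_le_div_iff₀ hαpos hαpos]
          nlinarith
        · intro h
          rw [ge_iff_le, div_le_div_iff₀ hαpos hαpos] at h
          nlinarith
      have hu_ord : ∀ x y, D.R x y ↔ D.uu a0 b0 x ≥ D.uu a0 b0 y :=
        fun x y => DS.uu_R_iff hab x y
      have hub := DS.uu_b0 hab
      have hua := DS.uu_a0 hab
      have hwb : w b0 = 0 := by simp [hw]
      have hwa : w a0 = 1 := by
        simp only [hw]
        rw [div_eq_one_iff_eq (ne_of_gt hαpos)]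
      have h1 := DS.rep_aux hab hu_mid hw_mid hu_ord hw_ord hub hua hwb hwa x
      have h2 := DS.rep_aux hab hw_mid hu_mid hw_ord hu_ord hwb hwa hub hua x
      have heq : D.uu a0 b0 x = w x := le_antisymm (not_lt.mp h2) (not_lt.mp h1)
      have h3 : α * D.uu a0 b0 x = v x - v b0 := by
        rw [heq]
        simp only [hw]
        rw [mul_div_cancel₀ _ (ne_of_gt hαpos)]
      linarith
end

section
/- Suppose a differentiable function u : ℝ → ℝ satisfies x > y ⟺ u(x) > u(y) and xy P zw ⟺ u(x) − u(y) > u(z) − u(w) for relations > (usual order) and P on ordered quadruples. If v : ℝ → ℝ is any other function satisfying the same two equivalences for the same relations, then v is a strictly increasing transform of u that preserves equalities of differences; in particular, if v is also assumed to satisfy v(x) − v(y) = v(z) − v(w) whenever u(x) − u(y) = u(z) − u(w), then v = α u + β for some α > 0, β ∈ ℝ. -/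
lemma aux_S (I : Set ℝ) (g : ℝ → ℝ)
    (hIcc : ∀ ⦃s t r : ℝ⦄, s ∈ I → t ∈ I → s ≤ r → r ≤ t → r ∈ I)
    (gdiff : ∀ ⦃s t s' t' : ℝ⦄, s ∈ I → t ∈ I → s' ∈ I → t' ∈ I →
      s - t = s' - t' → g s - g t = g s' - g t') :
    ∀ t e : ℝ, t ∈ I → 0 ≤ e → ∀ k : ℕ, t + k * e ∈ I →
      g (t + k * e) - g t = k * (g (t + e) - g t) := by
  intro t e ht he k
  induction k with
  | zero => intro _; simp
  | succ k ih =>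
    intro hk1
    have hc : ((k+1 : ℕ) : ℝ) = (k : ℝ) + 1 := by push_cast; ring
    rw [hc] at hk1 ⊢
    have hk0 : (0:ℝ) ≤ (k:ℝ) := Nat.cast_nonneg k
    have hkm : t + (k:ℝ) * e ∈ I := hIcc ht hk1 (by nlinarith) (by nlinarith)
    have h1 : t + e ∈ I := hIcc ht hk1 (by nlinarith) (by nlinarith)
    have key := gdiff hk1 hkm h1 ht (by ring)
    have ihh := ih hkm
    linarith

lemma aux_F (I : Set ℝ) (g : ℝ → ℝ)
    (hIcc : ∀ ⦃s t r : ℝ⦄, s ∈ I → t ∈ I → s ≤ r → r ≤ t → r ∈ I)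
    (gdiff : ∀ ⦃s t s' t' : ℝ⦄, s ∈ I → t ∈ I → s' ∈ I → t' ∈ I →
      s - t = s' - t' → g s - g t = g s' - g t') :
    ∀ t d : ℝ, t ∈ I → 0 < d → t + d ∈ I → ∀ k m : ℕ, 0 < m → k ≤ m →
      g (t + ((k:ℝ)/(m:ℝ)) * d) - g t = ((k:ℝ)/(m:ℝ)) * (g (t + d) - g t) := by
  intro t d ht hd htd k m hm hkm
  have hm0 : (0:ℝ) < (m:ℝ) := by exact_mod_cast hm
  set e := d / (m:ℝ) with he
  have he0 : 0 ≤ e := by positivity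
  have hme : (m:ℝ) * e = d := by rw [he]; field_simp
  have hkm' : (k:ℝ) ≤ (m:ℝ) := by exact_mod_cast hkm
  have hkle : (k:ℝ) * e ≤ d := by nlinarith
  have hkI : t + (k:ℝ) * e ∈ I := hIcc ht htd (by nlinarith) (by linarith)
  have h1 := aux_S I g hIcc gdiff t e ht he0 k hkI
  have h2 := aux_S I g hIcc gdiff t e ht he0 m (by rw [hme]; exact htd)
  rw [hme] at h2
  have harg : ((k:ℝ)/(m:ℝ)) * d = (k:ℝ) * e := by rw [he]; ring
  rw [harg, h1, h2]
  field_simp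

lemma aux_R (I : Set ℝ) (g : ℝ → ℝ)
    (hIcc : ∀ ⦃s t r : ℝ⦄, s ∈ I → t ∈ I → s ≤ r → r ≤ t → r ∈ I)
    (gmono : ∀ ⦃s t : ℝ⦄, s ∈ I → t ∈ I → t < s → g t < g s)
    (gdiff : ∀ ⦃s t s' t' : ℝ⦄, s ∈ I → t ∈ I → s' ∈ I → t' ∈ I →
      s - t = s' - t' → g s - g t = g s' - g t') :
    ∀ t d c : ℝ, t ∈ I → 0 < d → t + d ∈ I → 0 ≤ c → c ≤ d →
      g (t + c) - g t = c / d * (g (t + d) - g t) := by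
  intro t d c ht hd htd hc0 hcd
  set G := g (t + d) - g t with hGdef
  have hG : 0 < G := sub_pos.mpr (gmono htd ht (by linarith))
  have hcI : t + c ∈ I := hIcc ht htd (by linarith) (by linarith)
  have gmle : ∀ ⦃s t' : ℝ⦄, s ∈ I → t' ∈ I → t' ≤ s → g t' ≤ g s := by
    intro s t' hs ht' hle
    rcases eq_or_lt_of_le hle with h | h
    · rw [h]
    · exact (gmono hs ht' h).le
  have hQ : ∀ q : ℚ, 0 ≤ q → (q:ℝ) ≤ 1 → g (t + (q:ℝ) * d) - g t = (q:ℝ) * G := by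
    intro q hq0 hq1
    have hden : (0:ℝ) < (q.den:ℝ) := by exact_mod_cast q.pos
    have hnumeq : ((q.num.toNat : ℕ) : ℝ) = (q.num : ℝ) := by
      exact_mod_cast Int.toNat_of_nonneg (Rat.num_nonneg.mpr hq0)
    have hnum : (q:ℝ) = ((q.num.toNat : ℕ) : ℝ) / ((q.den : ℕ) : ℝ) := by
      rw [Rat.cast_def, hnumeq]
    have hkm : q.num.toNat ≤ q.den := by
      have h' : ((q.num.toNat : ℕ) : ℝ) ≤ ((q.den : ℕ) : ℝ) := by
        rw [hnum] at hq1
        have := (div_le_one hden).mp hq1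
        exact this
      exact_mod_cast h'
    have := aux_F I g hIcc gdiff t d ht hd htd q.num.toNat q.den q.pos hkm
    rw [hnum]
    exact this
  apply le_antisymm
  · by_contra h
    push_neg at h
    have hle1 : g (t + c) - g t ≤ G := by
      have := gmle htd hcI (by linarith)
      simp only [hGdef]; linarith
    set X := (g (t + c) - g t) / G with hXdef
    have hXle : X ≤ 1 := (div_le_one hG).mpr hle1
    have hcd' : c / d < X := by
      rw [hXdef, lt_div_iff₀ hG]
      linarith
    obtain ⟨q, hq1, hq2⟩ := exists_rat_btwn hcd'
    have hq0 : (0:ℝ) ≤ (q:ℝ) := le_trans (by positivity) hq1.le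
    have hqe := hQ q (by exact_mod_cast hq0) (le_trans hq2.le hXle)
    have hcq : c ≤ (q:ℝ) * d := by
      rw [div_lt_iff₀ hd] at hq1; linarith
    have hql1 : (q:ℝ) ≤ 1 := le_trans hq2.le hXle
    have hqdI : t + (q:ℝ) * d ∈ I := hIcc ht htd (by nlinarith) (by nlinarith)
    have hmon : g (t + c) ≤ g (t + (q:ℝ) * d) := gmle hqdI hcI (by linarith)
    have hXG : X * G = g (t + c) - g t := div_mul_cancel₀ _ hG.ne'
    nlinarith
  · by_contra h
    push_neg at h
    have hge0 : 0 ≤ g (t + c) - g t := by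
      have := gmle hcI ht (by linarith); linarith
    set X := (g (t + c) - g t) / G with hXdef
    have hX0 : 0 ≤ X := div_nonneg hge0 hG.le
    have hXc : X < c / d := by
      rw [hXdef, div_lt_iff₀ hG]
      have h2 : c / d * G < c / d * G + (c / d * G - (g (t + c) - g t)) := by linarith
      linarith
    obtain ⟨q, hq1, hq2⟩ := exists_rat_btwn hXc
    have hq0 : (0:ℝ) ≤ (q:ℝ) := le_trans hX0 hq1.le
    have hql1 : (q:ℝ) ≤ 1 := by
      have : c / d ≤ 1 := (div_le_one hd).mpr hcd
      linarith
    have hqe := hQ q (by exact_mod_cast hq0) hql1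
    have hcq : (q:ℝ) * d ≤ c := by
      rw [lt_div_iff₀ hd] at hq2
      linarith
    have hqdI : t + (q:ℝ) * d ∈ I := hIcc ht htd (by nlinarith) (by nlinarith)
    have hmon : g (t + (q:ℝ) * d) ≤ g (t + c) := gmle hcI hqdI (by linarith)
    have hXG : X * G = g (t + c) - g t := div_mul_cancel₀ _ hG.ne'
    nlinarith

lemma aux_main (I : Set ℝ) (g : ℝ → ℝ)
    (hIcc : ∀ ⦃s t r : ℝ⦄, s ∈ I → t ∈ I → s ≤ r → r ≤ t → r ∈ I)
    (gmono : ∀ ⦃s t : ℝ⦄, s ∈ I → t ∈ I → t < s → g t < g s)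
    (gdiff : ∀ ⦃s t s' t' : ℝ⦄, s ∈ I → t ∈ I → s' ∈ I → t' ∈ I →
      s - t = s' - t' → g s - g t = g s' - g t')
    (a b : ℝ) (ha : a ∈ I) (hb : b ∈ I) (hab : a < b) :
    ∀ ⦃s t : ℝ⦄, s ∈ I → t ∈ I →
      g s - g t = (g b - g a) / (b - a) * (s - t) := by
  intro s t hs ht
  set lo := min (min s t) a with hlo
  set hi := max (max s t) b with hhi
  have hloI : lo ∈ I := by
    rcases min_cases (min s t) a with ⟨h1, _⟩ | ⟨h1, _⟩ <;> rw [hlo, h1]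
    · rcases min_cases s t with ⟨h2, _⟩ | ⟨h2, _⟩ <;> rw [h2]
      exacts [hs, ht]
    · exact ha
  have hhiI : hi ∈ I := by
    rcases max_cases (max s t) b with ⟨h1, _⟩ | ⟨h1, _⟩ <;> rw [hhi, h1]
    · rcases max_cases s t with ⟨h2, _⟩ | ⟨h2, _⟩ <;> rw [h2]
      exacts [hs, ht]
    · exact hb
  have hloa : lo ≤ a := min_le_right _ _
  have hbhi : b ≤ hi := le_max_right _ _
  have hlos : lo ≤ s := le_trans (min_le_left _ _) (min_le_left _ _)
  have hlot : lo ≤ t := le_trans (min_le_left _ _) (min_le_right _ _)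
  have hshi : s ≤ hi := le_trans (le_max_left _ _) (le_max_left _ _)
  have hthi : t ≤ hi := le_trans (le_max_right _ _) (le_max_left _ _)
  have hd : 0 < hi - lo := by linarith
  have hdI : lo + (hi - lo) ∈ I := by
    have : lo + (hi - lo) = hi := by ring
    rw [this]; exact hhiI
  set T := g (lo + (hi - lo)) - g lo with hT
  have hval : ∀ r : ℝ, lo ≤ r → r ≤ hi →
      g r - g lo = (r - lo) / (hi - lo) * T := by
    intro r h1 h2
    have := aux_R I g hIcc gmono gdiff lo (hi - lo) (r - lo) hloI hd hdI
      (by linarith) (by linarith)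
    have harg : lo + (r - lo) = r := by ring
    rw [harg] at this
    exact this
  have hTs := hval s hlos hshi
  have hTt := hval t hlot hthi
  have hTa := hval a hloa (by linarith)
  have hTb := hval b (by linarith) hbhi
  have hba : b - a ≠ 0 := by intro hh; apply absurd hh; intro hh'; linarith
  have hdne : hi - lo ≠ 0 := hd.ne'
  have haux1 : (b - a) / (hi - lo) * T
      = (b - lo) / (hi - lo) * T - (a - lo) / (hi - lo) * T := by
    field_simp; ring
  have haux2 : (s - t) / (hi - lo) * T
      = (s - lo) / (hi - lo) * T - (t - lo) / (hi - lo) * T := by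
    field_simp; ring
  have hgba : g b - g a = (b - a) / (hi - lo) * T := by linarith
  have hgst : g s - g t = (s - t) / (hi - lo) * T := by linarith
  rw [hgst, hgba]
  field_simp

theorem stmt18 (u : ℝ → ℝ) (hdiff : Differentiable ℝ u)
    (P : ℝ → ℝ → ℝ → ℝ → Prop)
    (hu1 : ∀ x y : ℝ, x > y ↔ u x > u y)
    (hu2 : ∀ x y z w : ℝ, P x y z w ↔ u x - u y > u z - u w)
    (v : ℝ → ℝ)
    (hv1 : ∀ x y : ℝ, x > y ↔ v x > v y)
    (hv2 : ∀ x y z w : ℝ, P x y z w ↔ v x - v y > v z - v w)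
    (hv3 : ∀ x y z w : ℝ, u x - u y = u z - u w → v x - v y = v z - v w) :
    (∀ x y : ℝ, u x > u y ↔ v x > v y) ∧
    ∃ α β : ℝ, α > 0 ∧ ∀ x : ℝ, v x = α * u x + β := by
  have hcont : Continuous u := hdiff.continuous
  have hmono : StrictMono u := fun x y h => (hu1 y x).mp h
  have hinj : Function.Injective u := hmono.injective
  set I := Set.range u with hI
  set g : ℝ → ℝ := fun s => v (Function.invFun u s) with hgdef
  have hg : ∀ x : ℝ, g (u x) = v x := by
    intro x
    simp only [hgdef]
    rw [Function.leftInverse_invFun hinj x]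
  have hIcc : ∀ ⦃s t r : ℝ⦄, s ∈ I → t ∈ I → s ≤ r → r ≤ t → r ∈ I := by
    rintro s t r ⟨x, rfl⟩ ⟨y, rfl⟩ h1 h2
    exact intermediate_value_univ x y hcont ⟨h1, h2⟩
  have gmono : ∀ ⦃s t : ℝ⦄, s ∈ I → t ∈ I → t < s → g t < g s := by
    rintro s t ⟨x, rfl⟩ ⟨y, rfl⟩ h
    rw [hg, hg]
    exact (hv1 x y).mp ((hu1 x y).mpr h)
  have gdiff : ∀ ⦃s t s' t' : ℝ⦄, s ∈ I → t ∈ I → s' ∈ I → t' ∈ I →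
      s - t = s' - t' → g s - g t = g s' - g t' := by
    rintro s t s' t' ⟨x, rfl⟩ ⟨y, rfl⟩ ⟨z, rfl⟩ ⟨w, rfl⟩ h
    rw [hg, hg, hg, hg]
    exact hv3 x y z w h
  have ha : u 0 ∈ I := ⟨0, rfl⟩
  have hb : u 1 ∈ I := ⟨1, rfl⟩
  have hab : u 0 < u 1 := hmono zero_lt_one
  have key := aux_main I g hIcc gmono gdiff (u 0) (u 1) ha hb hab
  constructor
  · intro x y
    constructor
    · intro h
      exact (hv1 x y).mp ((hu1 x y).mpr h)
    · intro h
      exact (hu1 x y).mp ((hv1 x y).mpr h)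
  · refine ⟨(v 1 - v 0) / (u 1 - u 0), v 0 - (v 1 - v 0) / (u 1 - u 0) * u 0, ?_, ?_⟩
    · apply div_pos
      · have : v 0 < v 1 := (hv1 1 0).mp zero_lt_one
        linarith
      · linarith
    · intro x
      have hx := key ⟨x, rfl⟩ ⟨0, rfl⟩
      simp only [hg] at hx
      have hba : u 1 - u 0 ≠ 0 := by intro hh; apply absurd hh; intro hh'; linarith
      field_simp at hx ⊢
      linarith
end
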